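/- arXiv:math/0608352 — 2 statements merged into one kernel-verified Lean document; each statement's English description precedes it below -/
import Mathlib

section
/- Assume lim_{N→∞} d_U(A_N, A) = 0. Then for every function f : ℝ^r → ℝ of class C³ and every T > 0, sup_{N ≥ 1} sup_{0 ≤ t ≤ T} sup_{p ∈ K_N} | N·(U_{N,[Nt]} f(p) − f(p)) | < ∞. -/
open scoped BigOperators NNReal
open Finset MeasureTheory

noncomputable section

/-- A Q-matrix: nonnegative off-diagonal entries, rows summing to zero. -/
def IsQMatrix {r : ℕ} (M : Matrix (Fin r) (Fin r) ℝ) : Prop :=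
  (∀ i j, i ≠ j → 0 ≤ M i j) ∧ ∀ i, ∑ j, M i j = 0

/-- A stochastic matrix: nonnegative entries, rows summing to one. -/
def IsStochastic {r : ℕ} (M : Matrix (Fin r) (Fin r) ℝ) : Prop :=
  (∀ i j, 0 ≤ M i j) ∧ ∀ i, ∑ j, M i j = 1

/-- Frobenius norm of an `r×r` real matrix. -/
def frobNorm {r : ℕ} (M : Matrix (Fin r) (Fin r) ℝ) : ℝ :=
  Real.sqrt (∑ i, ∑ j, (M i j) ^ 2)

/-- The metric `d_U(x,y) = ∫₀^∞ e^{-u} sup_{0≤t≤u} (‖x(t)−y(t)‖ ∧ 1) du` on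
matrix-valued paths. -/
def dU {r : ℕ} (x y : ℝ → Matrix (Fin r) (Fin r) ℝ) : ℝ :=
  ∫ u in Set.Ioi (0 : ℝ),
    Real.exp (-u) * sSup ((fun t => min (frobNorm (x t - y t)) 1) '' Set.Icc 0 u)

/-- Multinomial probability weight `(∑β)!/∏ β_j! · ∏ p_j^{β_j}`. -/
def multinomialWeight {r : ℕ} (p : Fin r → ℝ) (β : Fin r → ℕ) : ℝ :=
  (Nat.multinomial Finset.univ β : ℝ) * ∏ j, p j ^ β j

/-- The internal-dynamics transition operator: `SOp N P f n = S_{N} f(n/N)`, where each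
of the `n i` agents of type `i` independently moves to type `j` with probability `P i j`,
the sum running over all arrays `ξ ∈ ℤ₊^{r×r}` whose `i`-th row sums to `n i`. -/
def SOp {r : ℕ} (N : ℕ) (P : Matrix (Fin r) (Fin r) ℝ) (f : (Fin r → ℝ) → ℝ)
    (n : Fin r → ℕ) : ℝ :=
  ∑ ξ ∈ Fintype.piFinset fun i => Finset.Nat.antidiagonalTuple r (n i),
    (∏ i, multinomialWeight (P i) (ξ i)) * f fun j => ((∑ i, ξ i j : ℕ) : ℝ) / N

/-- The multinomial-sampling operator `T_N f(p) = E[f(M/N)]`, `M ~ multinomial(N,p)`. -/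
def TOp {r : ℕ} (N : ℕ) (f : (Fin r → ℝ) → ℝ) (p : Fin r → ℝ) : ℝ :=
  ∑ α ∈ Finset.Nat.antidiagonalTuple r N,
    multinomialWeight p α * f fun i => (α i : ℝ) / N

/-- One-step operator of internal dynamics followed by multinomial sampling:
`U_{N,k} f = S_{N,k}(T_N f)`. -/
def UOp {r : ℕ} (N : ℕ) (P : Matrix (Fin r) (Fin r) ℝ) (f : (Fin r → ℝ) → ℝ)
    (n : Fin r → ℕ) : ℝ :=
  SOp N P (TOp N f) n

/-- The first-order generator `G_A(t) f(p) = ∑_{i,j} pᵢ aᵢⱼ(t) ∂f/∂xⱼ(p)`,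
here taking the matrix `A(t)` as argument. -/
def GA {r : ℕ} (M : Matrix (Fin r) (Fin r) ℝ) (f : (Fin r → ℝ) → ℝ) (p : Fin r → ℝ) : ℝ :=
  ∑ i, ∑ j, p i * M i j * fderiv ℝ f p (Pi.single j 1)

/-- The Wright–Fisher generator
`G_B f(p) = (1/2) ∑_{i,j} pᵢ(δᵢⱼ − pⱼ) ∂²f/∂xᵢ∂xⱼ(p)`. -/
def GB {r : ℕ} (f : (Fin r → ℝ) → ℝ) (p : Fin r → ℝ) : ℝ :=
  (1 / 2) * ∑ i, ∑ j,
    p i * ((if i = j then (1 : ℝ) else 0) - p j) *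
      fderiv ℝ (fun x => fderiv ℝ f x (Pi.single j 1)) p (Pi.single i 1)


namespace WF
open Function
variable {r : ℕ}

lemma mw_nonneg {p : Fin r → ℝ} (hp : ∀ j, 0 ≤ p j) (β : Fin r → ℕ) :
    0 ≤ multinomialWeight p β :=
  mul_nonneg (Nat.cast_nonneg _) (Finset.prod_nonneg fun j _ => pow_nonneg (hp j) _)

lemma mw_mass (p : Fin r → ℝ) (n : ℕ) :
    ∑ α ∈ Finset.Nat.antidiagonalTuple r n, multinomialWeight p α = (∑ j, p j) ^ n := by
  rw [show (Finset.Nat.antidiagonalTuple r n) = Finset.piAntidiag Finset.univ n from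
    (Finset.piAntidiag_univ_fin_eq_antidiagonalTuple n r).symm,
    Finset.sum_pow_eq_sum_piAntidiag]
  rfl

lemma multinomial_step (α : Fin r → ℕ) (j : Fin r) (h : 1 ≤ α j) :
    (α j) * Nat.multinomial Finset.univ α
      = (∑ i, α i) * Nat.multinomial Finset.univ (Function.update α j (α j - 1)) := by
  obtain ⟨m, hm⟩ : ∃ m, α j = m + 1 := ⟨α j - 1, (Nat.succ_pred_eq_of_pos h).symm⟩
  set β := Function.update α j (α j - 1) with hβ
  have hβj : β j = m := by simp [hβ, hm]
  have hβi : ∀ i, i ≠ j → β i = α i := fun i hi => Function.update_of_ne hi _ _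
  have hsum : ∑ i, α i = (∑ i, β i) + 1 := by
    rw [← Finset.add_sum_erase _ α (Finset.mem_univ j),
        ← Finset.add_sum_erase _ β (Finset.mem_univ j), hβj, hm]
    have : ∑ i ∈ Finset.univ.erase j, β i = ∑ i ∈ Finset.univ.erase j, α i :=
      Finset.sum_congr rfl fun i hi => hβi i (Finset.mem_erase.1 hi).1
    omega
  have hfac : ∏ i, Nat.factorial (α i) = α j * ∏ i, Nat.factorial (β i) := by
    rw [← Finset.mul_prod_erase _ (fun i => Nat.factorial (α i)) (Finset.mem_univ j),
        ← Finset.mul_prod_erase _ (fun i => Nat.factorial (β i)) (Finset.mem_univ j)]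
    have h1 : ∏ i ∈ Finset.univ.erase j, Nat.factorial (β i)
        = ∏ i ∈ Finset.univ.erase j, Nat.factorial (α i) :=
      Finset.prod_congr rfl fun i hi => by rw [hβi i (Finset.mem_erase.1 hi).1]
    rw [h1, hβj, hm]
    rw [show (m+1).factorial = (m+1) * m.factorial from rfl]
    ring
  have hpos : 0 < ∏ i, Nat.factorial (β i) :=
    Finset.prod_pos fun i _ => Nat.factorial_pos _
  apply Nat.eq_of_mul_eq_mul_left hpos
  calc (∏ i, Nat.factorial (β i)) * (α j * Nat.multinomial Finset.univ α)
      = (∏ i, Nat.factorial (α i)) * Nat.multinomial Finset.univ α := by rw [hfac]; ring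
    _ = (∑ i, α i).factorial := Nat.multinomial_spec _ _
    _ = ((∑ i, β i) + 1).factorial := by rw [hsum]
    _ = ((∑ i, β i) + 1) * (∑ i, β i).factorial := rfl
    _ = ((∑ i, β i) + 1) * ((∏ i, Nat.factorial (β i)) * Nat.multinomial Finset.univ β) := by
        rw [Nat.multinomial_spec]
    _ = (∏ i, Nat.factorial (β i)) * ((∑ i, α i) * Nat.multinomial Finset.univ β) := by
        rw [hsum]; ring

lemma moment_step (p : Fin r → ℝ) (j : Fin r) (m : ℕ) (G : (Fin r → ℕ) → ℝ) :
    ∑ α ∈ Finset.Nat.antidiagonalTuple r (m+1), (α j : ℝ) * multinomialWeight p α * G α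
      = ((m:ℝ)+1) * p j * ∑ β ∈ Finset.Nat.antidiagonalTuple r m,
          multinomialWeight p β * G (Function.update β j (β j + 1)) := by
  rw [Finset.mul_sum]
  rw [← Finset.sum_filter_of_ne (p := fun α => α j ≠ 0)
    (f := fun α => (α j : ℝ) * multinomialWeight p α * G α)
    (by intro x _ hx; by_contra h0; exact hx (by simp [h0]))]
  refine Finset.sum_nbij' (i := fun α => Function.update α j (α j - 1))
    (j := fun β => Function.update β j (β j + 1)) ?_ ?_ ?_ ?_ ?_
  · intro α hα
    simp only [Finset.mem_filter, Finset.Nat.mem_antidiagonalTuple] at hα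
    obtain ⟨h1, h2⟩ := hα
    rw [Finset.Nat.mem_antidiagonalTuple]
    rw [Finset.sum_update_of_mem (Finset.mem_univ j)]
    rw [← Finset.add_sum_erase _ α (Finset.mem_univ j), Finset.erase_eq] at h1
    omega
  · intro β hβ
    rw [Finset.Nat.mem_antidiagonalTuple] at hβ
    simp only [Finset.mem_filter, Finset.Nat.mem_antidiagonalTuple]
    constructor
    · rw [Finset.sum_update_of_mem (Finset.mem_univ j)]
      rw [← Finset.add_sum_erase _ β (Finset.mem_univ j), Finset.erase_eq] at hβ
      omega
    · simp
  · intro α hα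
    simp only [Finset.mem_filter] at hα
    funext i
    rcases eq_or_ne i j with rfl | hi
    · simp only [Function.update_self]
      omega
    · simp [Function.update_of_ne hi]
  · intro β _
    funext i
    rcases eq_or_ne i j with rfl | hi
    · simp only [Function.update_self]; omega
    · simp [Function.update_of_ne hi]
  · intro α hα
    simp only [Finset.mem_filter, Finset.Nat.mem_antidiagonalTuple] at hα
    obtain ⟨h1, h2⟩ := hα
    have hj : 1 ≤ α j := Nat.one_le_iff_ne_zero.2 h2
    set β := Function.update α j (α j - 1) with hβdef
    have hupd : Function.update β j (β j + 1) = α := by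
      funext i
      rcases eq_or_ne i j with rfl | hi
      · simp only [hβdef, Function.update_self]; omega
      · simp [hβdef, Function.update_of_ne hi]
    rw [hupd]
    have hmult : ((α j : ℝ)) * (Nat.multinomial Finset.univ α : ℝ)
        = ((m:ℝ)+1) * (Nat.multinomial Finset.univ β : ℝ) := by
      have := multinomial_step α j hj
      rw [h1] at this
      exact_mod_cast congrArg (Nat.cast (R := ℝ)) this
    have hprod : ∏ i, p i ^ α i = p j * ∏ i, p i ^ β i := by
      rw [← Finset.mul_prod_erase _ (fun i => p i ^ α i) (Finset.mem_univ j),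
          ← Finset.mul_prod_erase _ (fun i => p i ^ β i) (Finset.mem_univ j)]
      have h1' : ∏ i ∈ Finset.univ.erase j, p i ^ β i
          = ∏ i ∈ Finset.univ.erase j, p i ^ α i :=
        Finset.prod_congr rfl fun i hi => by
          rw [hβdef, Function.update_of_ne (Finset.mem_erase.1 hi).1]
      rw [h1']
      have : α j = β j + 1 := by simp only [hβdef, Function.update_self]; omega
      rw [this, pow_succ]
      ring
    simp only [multinomialWeight]
    rw [hprod]
    linear_combination (p j * (∏ i, p i ^ β i) * G α) * hmult

lemma mw_first_moment (p : Fin r → ℝ) (n : ℕ) (j : Fin r) :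
    ∑ α ∈ Finset.Nat.antidiagonalTuple r n, multinomialWeight p α * (α j : ℝ)
      = n * p j * (∑ i, p i) ^ (n - 1) := by
  cases n with
  | zero => simp [Finset.Nat.antidiagonalTuple_zero_right]
  | succ m =>
    have h := moment_step p j m (fun _ => 1)
    simp only [mul_one] at h
    have : ∑ α ∈ Finset.Nat.antidiagonalTuple r (m+1), multinomialWeight p α * (α j : ℝ)
        = ∑ α ∈ Finset.Nat.antidiagonalTuple r (m+1), (α j : ℝ) * multinomialWeight p α :=
      Finset.sum_congr rfl fun _ _ => mul_comm _ _
    rw [this, h, mw_mass]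
    push_cast
    ring_nf

lemma mw_second_moment (p : Fin r → ℝ) (n : ℕ) (j : Fin r) :
    ∑ α ∈ Finset.Nat.antidiagonalTuple r n, multinomialWeight p α * ((α j : ℝ) * ((α j : ℝ) - 1))
      = (n:ℝ) * ((n:ℝ) - 1) * p j ^ 2 * (∑ i, p i) ^ (n - 2) := by
  cases n with
  | zero => simp [Finset.Nat.antidiagonalTuple_zero_right]
  | succ m =>
    have h := moment_step p j m (fun α => (α j : ℝ) - 1)
    have hL : ∑ α ∈ Finset.Nat.antidiagonalTuple r (m+1),
        multinomialWeight p α * ((α j : ℝ) * ((α j : ℝ) - 1))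
        = ∑ α ∈ Finset.Nat.antidiagonalTuple r (m+1),
          (α j : ℝ) * multinomialWeight p α * ((α j : ℝ) - 1) :=
      Finset.sum_congr rfl fun _ _ => by ring
    have hR : ∑ β ∈ Finset.Nat.antidiagonalTuple r m,
        multinomialWeight p β * ((↑(Function.update β j (β j + 1) j) : ℝ) - 1)
        = ∑ β ∈ Finset.Nat.antidiagonalTuple r m, multinomialWeight p β * (β j : ℝ) :=
      Finset.sum_congr rfl fun β _ => by
        simp only [Function.update_self]; push_cast; ring
    rw [hL, h, hR, mw_first_moment]
    have : (m + 1 : ℕ) - 2 = m - 1 := by omega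
    rw [this]
    push_cast
    ring

lemma mw_variance (p : Fin r → ℝ) (hp1 : ∑ i, p i = 1) (n : ℕ) (j : Fin r) :
    ∑ α ∈ Finset.Nat.antidiagonalTuple r n, multinomialWeight p α * ((α j : ℝ) - n * p j)^2
      = n * p j * (1 - p j) := by
  have h0 := mw_mass p n
  have h1 := mw_first_moment p n j
  have h2 := mw_second_moment p n j
  rw [hp1, one_pow] at h0 h1 h2
  have expand : ∀ α : Fin r → ℕ, multinomialWeight p α * ((α j : ℝ) - n * p j)^2
      = multinomialWeight p α * ((α j:ℝ) * ((α j:ℝ) - 1))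
        + (1 - 2*((n:ℝ)*p j)) * (multinomialWeight p α * (α j:ℝ))
        + ((n:ℝ)*p j)^2 * multinomialWeight p α := fun α => by ring
  rw [Finset.sum_congr rfl fun α _ => expand α]
  rw [Finset.sum_add_distrib, Finset.sum_add_distrib, ← Finset.mul_sum, ← Finset.mul_sum,
    h0, h1, h2]
  ring


section SOpMoments
variable (P : Matrix (Fin r) (Fin r) ℝ) (n : Fin r → ℕ)

/-- Product-form expectations factorize over the rows. -/
lemma indep_prod (h : Fin r → (Fin r → ℕ) → ℝ) :
    ∑ ξ ∈ Fintype.piFinset (fun i => Finset.Nat.antidiagonalTuple r (n i)), ∏ i, h i (ξ i)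
      = ∏ i, ∑ x ∈ Finset.Nat.antidiagonalTuple r (n i), h i x :=
  (Finset.prod_univ_sum _ _).symm

variable (hP1 : ∀ i, ∑ j, P i j = 1)
include hP1

lemma S_mass :
    ∑ ξ ∈ Fintype.piFinset (fun i => Finset.Nat.antidiagonalTuple r (n i)),
      ∏ i, multinomialWeight (P i) (ξ i) = 1 := by
  rw [indep_prod]
  rw [Finset.prod_eq_one]
  intro i _
  rw [mw_mass, hP1, one_pow]

lemma S_row_center (j : Fin r) (i₀ : Fin r) :
    ∑ x ∈ Finset.Nat.antidiagonalTuple r (n i₀),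
      multinomialWeight (P i₀) x * ((x j : ℝ) - (n i₀ : ℝ) * P i₀ j) = 0 := by
  have h1 : ∑ x ∈ Finset.Nat.antidiagonalTuple r (n i₀),
      multinomialWeight (P i₀) x * ((x j : ℝ) - (n i₀ : ℝ) * P i₀ j)
      = (∑ x ∈ Finset.Nat.antidiagonalTuple r (n i₀), multinomialWeight (P i₀) x * (x j:ℝ))
        - ((n i₀ : ℝ) * P i₀ j)
          * ∑ x ∈ Finset.Nat.antidiagonalTuple r (n i₀), multinomialWeight (P i₀) x := by
    rw [Finset.mul_sum, ← Finset.sum_sub_distrib]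
    exact Finset.sum_congr rfl fun x _ => by ring
  rw [h1, mw_first_moment, mw_mass, hP1, one_pow, one_pow]
  ring

lemma S_single (j : Fin r) (i₀ : Fin r) :
    ∑ ξ ∈ Fintype.piFinset (fun i => Finset.Nat.antidiagonalTuple r (n i)),
      (∏ i, multinomialWeight (P i) (ξ i)) * ((ξ i₀ j : ℝ) - (n i₀ : ℝ) * P i₀ j) = 0 := by
  have key : ∀ ξ : Fin r → Fin r → ℕ,
      (∏ i, multinomialWeight (P i) (ξ i)) * ((ξ i₀ j : ℝ) - (n i₀ : ℝ) * P i₀ j)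
      = ∏ i, (multinomialWeight (P i) (ξ i)
          * (if i = i₀ then ((ξ i j : ℝ) - (n i : ℝ) * P i j) else 1)) := by
    intro ξ
    rw [Finset.prod_mul_distrib,
      Finset.prod_ite_eq' Finset.univ i₀ (fun i => ((ξ i j : ℝ) - (n i : ℝ) * P i j))]
    simp
  rw [Finset.sum_congr rfl fun ξ _ => key ξ, indep_prod n
    (fun i x => multinomialWeight (P i) x
      * (if i = i₀ then ((x j : ℝ) - (n i : ℝ) * P i j) else 1))]
  apply Finset.prod_eq_zero (Finset.mem_univ i₀)
  have : ∀ x : Fin r → ℕ, multinomialWeight (P i₀) x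
      * (if i₀ = i₀ then ((x j : ℝ) - (n i₀ : ℝ) * P i₀ j) else 1)
      = multinomialWeight (P i₀) x * ((x j : ℝ) - (n i₀ : ℝ) * P i₀ j) := by
    intro x; rw [if_pos rfl]
  rw [Finset.sum_congr rfl fun x _ => this x]
  exact S_row_center P n hP1 j i₀

lemma S_cross (j : Fin r) {i₁ i₂ : Fin r} (hne : i₁ ≠ i₂) :
    ∑ ξ ∈ Fintype.piFinset (fun i => Finset.Nat.antidiagonalTuple r (n i)),
      (∏ i, multinomialWeight (P i) (ξ i))
        * (((ξ i₁ j : ℝ) - (n i₁ : ℝ) * P i₁ j) * ((ξ i₂ j : ℝ) - (n i₂ : ℝ) * P i₂ j)) = 0 := by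
  have key : ∀ ξ : Fin r → Fin r → ℕ,
      (∏ i, multinomialWeight (P i) (ξ i))
        * (((ξ i₁ j : ℝ) - (n i₁ : ℝ) * P i₁ j) * ((ξ i₂ j : ℝ) - (n i₂ : ℝ) * P i₂ j))
      = ∏ i, (multinomialWeight (P i) (ξ i)
          * ((if i = i₁ then ((ξ i j : ℝ) - (n i : ℝ) * P i j) else 1)
            * (if i = i₂ then ((ξ i j : ℝ) - (n i : ℝ) * P i j) else 1))) := by
    intro ξ
    rw [Finset.prod_mul_distrib, Finset.prod_mul_distrib,
      Finset.prod_ite_eq' Finset.univ i₁ (fun i => ((ξ i j : ℝ) - (n i : ℝ) * P i j)),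
      Finset.prod_ite_eq' Finset.univ i₂ (fun i => ((ξ i j : ℝ) - (n i : ℝ) * P i j))]
    simp
  rw [Finset.sum_congr rfl fun ξ _ => key ξ, indep_prod n
    (fun i x => multinomialWeight (P i) x
      * ((if i = i₁ then ((x j : ℝ) - (n i : ℝ) * P i j) else 1)
        * (if i = i₂ then ((x j : ℝ) - (n i : ℝ) * P i j) else 1)))]
  apply Finset.prod_eq_zero (Finset.mem_univ i₁)
  have : ∀ x : Fin r → ℕ, multinomialWeight (P i₁) x
      * ((if i₁ = i₁ then ((x j : ℝ) - (n i₁ : ℝ) * P i₁ j) else 1)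
        * (if i₁ = i₂ then ((x j : ℝ) - (n i₁ : ℝ) * P i₁ j) else 1))
      = multinomialWeight (P i₁) x * ((x j : ℝ) - (n i₁ : ℝ) * P i₁ j) := by
    intro x; rw [if_pos rfl, if_neg hne, mul_one]
  rw [Finset.sum_congr rfl fun x _ => this x]
  exact S_row_center P n hP1 j i₁

lemma S_diag (j : Fin r) (i₀ : Fin r) :
    ∑ ξ ∈ Fintype.piFinset (fun i => Finset.Nat.antidiagonalTuple r (n i)),
      (∏ i, multinomialWeight (P i) (ξ i)) * ((ξ i₀ j : ℝ) - (n i₀ : ℝ) * P i₀ j) ^ 2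
      = (n i₀ : ℝ) * P i₀ j * (1 - P i₀ j) := by
  have key : ∀ ξ : Fin r → Fin r → ℕ,
      (∏ i, multinomialWeight (P i) (ξ i)) * ((ξ i₀ j : ℝ) - (n i₀ : ℝ) * P i₀ j) ^ 2
      = ∏ i, (multinomialWeight (P i) (ξ i)
          * (if i = i₀ then ((ξ i j : ℝ) - (n i : ℝ) * P i j) ^ 2 else 1)) := by
    intro ξ
    rw [Finset.prod_mul_distrib,
      Finset.prod_ite_eq' Finset.univ i₀ (fun i => ((ξ i j : ℝ) - (n i : ℝ) * P i j) ^ 2)]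
    simp
  rw [Finset.sum_congr rfl fun ξ _ => key ξ, indep_prod n
    (fun i x => multinomialWeight (P i) x
      * (if i = i₀ then ((x j : ℝ) - (n i : ℝ) * P i j) ^ 2 else 1))]
  have inner : ∀ i : Fin r, ∑ x ∈ Finset.Nat.antidiagonalTuple r (n i),
      multinomialWeight (P i) x
        * (if i = i₀ then ((x j : ℝ) - (n i : ℝ) * P i j) ^ 2 else 1)
      = if i = i₀ then (n i₀ : ℝ) * P i₀ j * (1 - P i₀ j) else 1 := by
    intro i
    by_cases hi : i = i₀
    · subst hi
      simp only [if_pos rfl]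
      exact mw_variance (P i) (hP1 i) (n i) j
    · simp only [if_neg hi, mul_one]
      rw [mw_mass, hP1, one_pow]
  rw [Finset.prod_congr rfl fun i _ => inner i,
    Finset.prod_ite_eq' Finset.univ i₀ (fun _ => (n i₀ : ℝ) * P i₀ j * (1 - P i₀ j))]
  simp

lemma S_var (j : Fin r) :
    ∑ ξ ∈ Fintype.piFinset (fun i => Finset.Nat.antidiagonalTuple r (n i)),
      (∏ i, multinomialWeight (P i) (ξ i))
        * ((∑ i, (ξ i j : ℝ)) - ∑ i, (n i : ℝ) * P i j) ^ 2
      = ∑ i, (n i : ℝ) * P i j * (1 - P i j) := by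
  have expand : ∀ ξ : Fin r → Fin r → ℕ,
      (∏ i, multinomialWeight (P i) (ξ i))
        * ((∑ i, (ξ i j : ℝ)) - ∑ i, (n i : ℝ) * P i j) ^ 2
      = ∑ i₁, ∑ i₂, (∏ i, multinomialWeight (P i) (ξ i))
          * (((ξ i₁ j : ℝ) - (n i₁ : ℝ) * P i₁ j) * ((ξ i₂ j : ℝ) - (n i₂ : ℝ) * P i₂ j)) := by
    intro ξ
    have h1 : ((∑ i, (ξ i j : ℝ)) - ∑ i, (n i : ℝ) * P i j)
        = ∑ i, ((ξ i j : ℝ) - (n i : ℝ) * P i j) := by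
      rw [Finset.sum_sub_distrib]
    rw [h1, sq, Finset.sum_mul_sum]
    rw [Finset.mul_sum]
    exact Finset.sum_congr rfl fun i₁ _ => by rw [Finset.mul_sum]
  rw [Finset.sum_congr rfl fun ξ _ => expand ξ]
  rw [Finset.sum_comm]
  have swap2 : ∀ i₁ : Fin r,
      ∑ ξ ∈ Fintype.piFinset (fun i => Finset.Nat.antidiagonalTuple r (n i)), ∑ i₂,
        (∏ i, multinomialWeight (P i) (ξ i))
          * (((ξ i₁ j : ℝ) - (n i₁ : ℝ) * P i₁ j) * ((ξ i₂ j : ℝ) - (n i₂ : ℝ) * P i₂ j))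
      = ∑ i₂, ∑ ξ ∈ Fintype.piFinset (fun i => Finset.Nat.antidiagonalTuple r (n i)),
        (∏ i, multinomialWeight (P i) (ξ i))
          * (((ξ i₁ j : ℝ) - (n i₁ : ℝ) * P i₁ j) * ((ξ i₂ j : ℝ) - (n i₂ : ℝ) * P i₂ j)) :=
    fun i₁ => Finset.sum_comm
  rw [Finset.sum_congr rfl fun i₁ _ => swap2 i₁]
  have inner : ∀ i₁ i₂ : Fin r,
      ∑ ξ ∈ Fintype.piFinset (fun i => Finset.Nat.antidiagonalTuple r (n i)),
        (∏ i, multinomialWeight (P i) (ξ i))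
          * (((ξ i₁ j : ℝ) - (n i₁ : ℝ) * P i₁ j) * ((ξ i₂ j : ℝ) - (n i₂ : ℝ) * P i₂ j))
      = if i₁ = i₂ then (n i₁ : ℝ) * P i₁ j * (1 - P i₁ j) else 0 := by
    intro i₁ i₂
    by_cases h : i₁ = i₂
    · subst h
      rw [if_pos rfl, ← S_diag P n hP1 j i₁]
      exact Finset.sum_congr rfl fun ξ _ => by ring
    · rw [if_neg h]
      exact S_cross P n hP1 j h
  rw [Finset.sum_congr rfl fun i₁ _ =>
    Finset.sum_congr rfl fun i₂ _ => inner i₁ i₂]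
  exact Finset.sum_congr rfl fun i₁ _ => by
    rw [Finset.sum_ite_eq Finset.univ i₁ (fun i₂ => (n i₁ : ℝ) * P i₁ j * (1 - P i₁ j))]
    simp

end SOpMoments

section Taylor

lemma sup_norm_sq_le (v : Fin r → ℝ) : ‖v‖ ^ 2 ≤ ∑ j, (v j) ^ 2 := by
  have h1 : ‖v‖ ≤ Real.sqrt (∑ j, (v j) ^ 2) := by
    rw [pi_norm_le_iff_of_nonneg (Real.sqrt_nonneg _)]
    intro i
    rw [Real.norm_eq_abs, ← Real.sqrt_sq_eq_abs]
    exact Real.sqrt_le_sqrt (Finset.single_le_sum (f := fun j => (v j) ^ 2)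
      (fun j _ => sq_nonneg _) (Finset.mem_univ i))
  calc ‖v‖ ^ 2 ≤ (Real.sqrt (∑ j, (v j) ^ 2)) ^ 2 :=
        pow_le_pow_left₀ (norm_nonneg _) h1 2
    _ = ∑ j, (v j) ^ 2 := Real.sq_sqrt (Finset.sum_nonneg fun j _ => sq_nonneg _)

lemma norm_sub_le_of_segment {x y z : Fin r → ℝ} (hz : z ∈ segment ℝ x y) :
    ‖z - x‖ ≤ ‖y - x‖ := by
  obtain ⟨a, b, ha, hb, hab, rfl⟩ := hz
  have ha' : a = 1 - b := by linarith
  subst ha'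
  have key : (1 - b) • x + b • y - x = b • (y - x) := by module
  rw [key, norm_smul, Real.norm_eq_abs, abs_of_nonneg hb]
  have hb1 : b ≤ 1 := by linarith
  nlinarith [norm_nonneg (y - x)]

lemma taylor_bound {f : (Fin r → ℝ) → ℝ}
    (hd : Differentiable ℝ f) (hd2 : Differentiable ℝ (fderiv ℝ f)) {M₂ : ℝ}
    (hM : ∀ z ∈ stdSimplex ℝ (Fin r), ‖fderiv ℝ (fderiv ℝ f) z‖ ≤ M₂)
    {x y : Fin r → ℝ} (hx : x ∈ stdSimplex ℝ (Fin r)) (hy : y ∈ stdSimplex ℝ (Fin r)) :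
    |f y - f x - fderiv ℝ f x (y - x)| ≤ M₂ * ‖y - x‖ ^ 2 := by
  set L := fderiv ℝ f x with hL
  have hseg : segment ℝ x y ⊆ stdSimplex ℝ (Fin r) :=
    (convex_stdSimplex ℝ (Fin r)).segment_subset hx hy
  have hD1 : ∀ z ∈ stdSimplex ℝ (Fin r), ∀ w ∈ stdSimplex ℝ (Fin r),
      ‖fderiv ℝ f w - fderiv ℝ f z‖ ≤ M₂ * ‖w - z‖ :=
    fun z hz w hw => Convex.norm_image_sub_le_of_norm_fderiv_le
      (fun u _ => hd2 u) (fun u hu => hM u hu) (convex_stdSimplex ℝ (Fin r)) hz hw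
  -- g z = f z - L z
  set g : (Fin r → ℝ) → ℝ := fun z => f z - L z with hg
  have hgd : ∀ z, DifferentiableAt ℝ g z := fun z => (hd z).sub (L.differentiable z)
  have hgder : ∀ z, fderiv ℝ g z = fderiv ℝ f z - L := by
    intro z
    rw [hg]
    rw [fderiv_fun_sub (hd z) (L.differentiable z), L.fderiv]
  have hbound : ∀ z ∈ segment ℝ x y, ‖fderiv ℝ g z‖ ≤ M₂ * ‖y - x‖ := by
    intro z hz
    rw [hgder]
    calc ‖fderiv ℝ f z - L‖ ≤ M₂ * ‖z - x‖ := hD1 x hx z (hseg hz)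
      _ ≤ M₂ * ‖y - x‖ := by
          have hM0 : 0 ≤ M₂ := le_trans (by positivity) (hM x hx)
          exact mul_le_mul_of_nonneg_left (norm_sub_le_of_segment hz) hM0
  have := Convex.norm_image_sub_le_of_norm_fderiv_le (𝕜 := ℝ)
    (fun z _ => hgd z) hbound (convex_segment x y)
    (left_mem_segment ℝ x y) (right_mem_segment ℝ x y)
  have heq : g y - g x = f y - f x - L (y - x) := by
    simp only [hg]
    rw [L.map_sub]
    ring
  rw [heq] at this
  rw [← Real.norm_eq_abs]
  calc ‖f y - f x - L (y - x)‖ ≤ M₂ * ‖y - x‖ * ‖y - x‖ := this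
    _ = M₂ * ‖y - x‖ ^ 2 := by ring

end Taylor

section TOpBound

lemma TOp_taylor {f : (Fin r → ℝ) → ℝ}
    (hd : Differentiable ℝ f) (hd2 : Differentiable ℝ (fderiv ℝ f)) {M₂ : ℝ}
    (hM : ∀ z ∈ stdSimplex ℝ (Fin r), ‖fderiv ℝ (fderiv ℝ f) z‖ ≤ M₂)
    (N : ℕ) (hN : 1 ≤ N) {q : Fin r → ℝ} (hq : q ∈ stdSimplex ℝ (Fin r)) :
    |TOp N f q - f q| ≤ M₂ / N := by
  have hq0 : ∀ i, 0 ≤ q i := hq.1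
  have hq1 : ∑ i, q i = 1 := hq.2
  have hN0 : (0:ℝ) < N := by exact_mod_cast Nat.pos_of_ne_zero (by omega)
  have hM0 : 0 ≤ M₂ := le_trans (by positivity) (hM q hq)
  have hmass : ∑ α ∈ Finset.Nat.antidiagonalTuple r N, multinomialWeight q α = 1 := by
    rw [mw_mass, hq1, one_pow]
  have hfm : ∀ j, ∑ α ∈ Finset.Nat.antidiagonalTuple r N,
      multinomialWeight q α * (α j : ℝ) = N * q j := by
    intro j
    rw [mw_first_moment, hq1, one_pow, mul_one]
  set L := fderiv ℝ f q with hLdef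
  set y : (Fin r → ℕ) → (Fin r → ℝ) := fun α => fun i => (α i : ℝ) / N with hy
  have hyK : ∀ α ∈ Finset.Nat.antidiagonalTuple r N, y α ∈ stdSimplex ℝ (Fin r) := by
    intro α hα
    rw [Finset.Nat.mem_antidiagonalTuple] at hα
    constructor
    · intro i; exact div_nonneg (Nat.cast_nonneg _) hN0.le
    · rw [hy]
      simp only
      rw [← Finset.sum_div, ← Nat.cast_sum, hα]
      field_simp
  have hvec : ∑ α ∈ Finset.Nat.antidiagonalTuple r N,
      multinomialWeight q α • (y α - q) = 0 := by
    funext j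
    simp only [Finset.sum_apply, Pi.smul_apply, Pi.sub_apply, Pi.zero_apply, smul_eq_mul, hy]
    have e : ∀ α : Fin r → ℕ, multinomialWeight q α * ((α j : ℝ) / N - q j)
        = (1/N) * (multinomialWeight q α * (α j : ℝ)) - q j * multinomialWeight q α := by
      intro α; field_simp
    rw [Finset.sum_congr rfl fun α _ => e α, Finset.sum_sub_distrib, ← Finset.mul_sum,
      ← Finset.mul_sum, hfm, hmass]
    field_simp
    try ring
  have hlin : ∑ α ∈ Finset.Nat.antidiagonalTuple r N,
      multinomialWeight q α * L (y α - q) = 0 := by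
    have e : ∀ α : Fin r → ℕ, multinomialWeight q α * L (y α - q)
        = L (multinomialWeight q α • (y α - q)) := by
      intro α; rw [L.map_smul, smul_eq_mul]
    rw [Finset.sum_congr rfl fun α _ => e α, ← map_sum, hvec, map_zero]
  have hsplit : ∑ α ∈ Finset.Nat.antidiagonalTuple r N,
      multinomialWeight q α * (f (y α) - f q - L (y α - q)) = TOp N f q - f q := by
    have e1 : ∀ α : Fin r → ℕ, multinomialWeight q α * (f (y α) - f q - L (y α - q))
        = multinomialWeight q α * f (y α) - multinomialWeight q α * f q
          - multinomialWeight q α * L (y α - q) := fun α => by ring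
    rw [Finset.sum_congr rfl fun α _ => e1 α, Finset.sum_sub_distrib, Finset.sum_sub_distrib,
      hlin, ← Finset.sum_mul, hmass, sub_zero, one_mul]
    rfl
  have hvar : ∀ j, ∑ α ∈ Finset.Nat.antidiagonalTuple r N,
      multinomialWeight q α * ((α j : ℝ)/N - q j)^2 = q j * (1 - q j) / N := by
    intro j
    have e : ∀ α : Fin r → ℕ, multinomialWeight q α * ((α j : ℝ)/N - q j)^2
        = (multinomialWeight q α * ((α j : ℝ) - (N:ℝ) * q j)^2) / (N:ℝ)^2 := by
      intro α; field_simp; try ring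
    rw [Finset.sum_congr rfl fun α _ => e α, ← Finset.sum_div, mw_variance q hq1 N j]
    field_simp
    try ring
  rw [← hsplit]
  have step1 : |∑ α ∈ Finset.Nat.antidiagonalTuple r N,
      multinomialWeight q α * (f (y α) - f q - L (y α - q))|
      ≤ ∑ α ∈ Finset.Nat.antidiagonalTuple r N,
        multinomialWeight q α * (M₂ * ∑ j, ((α j : ℝ)/N - q j)^2) := by
    refine le_trans (Finset.abs_sum_le_sum_abs _ _) (Finset.sum_le_sum ?_)
    intro α hα
    rw [abs_mul, abs_of_nonneg (mw_nonneg hq0 α)]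
    refine mul_le_mul_of_nonneg_left ?_ (mw_nonneg hq0 α)
    refine le_trans (taylor_bound hd hd2 hM hq (hyK α hα)) ?_
    refine mul_le_mul_of_nonneg_left ?_ hM0
    refine le_trans (sup_norm_sq_le _) ?_
    refine le_of_eq (Finset.sum_congr rfl fun j _ => ?_)
    simp [hy]
  refine le_trans step1 ?_
  have step2 : ∑ α ∈ Finset.Nat.antidiagonalTuple r N,
      multinomialWeight q α * (M₂ * ∑ j, ((α j : ℝ)/N - q j)^2)
      = M₂ * ∑ j, (q j * (1 - q j) / N) := by
    have e : ∀ α : Fin r → ℕ, multinomialWeight q α * (M₂ * ∑ j, ((α j : ℝ)/N - q j)^2)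
        = M₂ * ∑ j, multinomialWeight q α * ((α j : ℝ)/N - q j)^2 := by
      intro α
      rw [Finset.mul_sum, Finset.mul_sum, Finset.mul_sum]
      exact Finset.sum_congr rfl fun j _ => by ring
    rw [Finset.sum_congr rfl fun α _ => e α, ← Finset.mul_sum, Finset.sum_comm]
    rw [Finset.sum_congr rfl fun j (_ : j ∈ Finset.univ) => hvar j]
  rw [step2]
  have step3 : ∑ j, (q j * (1 - q j) / (N:ℝ)) ≤ 1 / N := by
    have h1 : ∑ j, (q j * (1 - q j) / (N:ℝ)) ≤ ∑ j, q j / N := by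
      refine Finset.sum_le_sum fun j _ => ?_
      refine (div_le_div_iff_of_pos_right hN0).mpr ?_
      have hle1 : q j ≤ 1 := by
        rw [← hq1]
        exact Finset.single_le_sum (fun i _ => hq0 i) (Finset.mem_univ j)
      nlinarith [hq0 j]
    calc ∑ j, (q j * (1 - q j) / (N:ℝ)) ≤ ∑ j, q j / N := h1
      _ = 1 / N := by rw [← Finset.sum_div, hq1]
  calc M₂ * ∑ j, (q j * (1 - q j) / (N:ℝ)) ≤ M₂ * (1/N) := mul_le_mul_of_nonneg_left step3 hM0
    _ = M₂ / N := by ring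

end TOpBound

section MainEst

lemma main_est (N : ℕ) (hN : 1 ≤ N) (B P : Matrix (Fin r) (Fin r) ℝ)
    (hPdef : ∀ i j, P i j = (if i = j then (1:ℝ) else 0) + B i j / N)
    (hP0 : ∀ i j, 0 ≤ P i j) (hP1 : ∀ i, ∑ j, P i j = 1)
    (CA : ℝ) (hCA0 : 0 ≤ CA) (hCA : ∀ i j, |B i j| ≤ CA)
    {f : (Fin r → ℝ) → ℝ}
    (hd : Differentiable ℝ f) (hd2 : Differentiable ℝ (fderiv ℝ f)) {M₁ M₂ : ℝ}
    (hM₁ : ∀ z ∈ stdSimplex ℝ (Fin r), ‖fderiv ℝ f z‖ ≤ M₁)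
    (hM₂ : ∀ z ∈ stdSimplex ℝ (Fin r), ‖fderiv ℝ (fderiv ℝ f) z‖ ≤ M₂)
    (n : Fin r → ℕ) (hn : ∑ i, n i = N) :
    |(N:ℝ) * (SOp N P (TOp N f) n - f (fun i => (n i:ℝ)/N))|
      ≤ M₂ + (M₁ * CA + M₂ * (1 + r * CA^2)) := by
  have hN0 : (0:ℝ) < N := by exact_mod_cast Nat.pos_of_ne_zero (by omega)
  set p : Fin r → ℝ := fun i => (n i : ℝ)/N with hpdef
  have hpK : p ∈ stdSimplex ℝ (Fin r) := by
    constructor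
    · intro i; exact div_nonneg (Nat.cast_nonneg _) hN0.le
    · rw [hpdef]
      simp only
      rw [← Finset.sum_div, ← Nat.cast_sum, hn]
      field_simp
  have hM₂0 : 0 ≤ M₂ := le_trans (by positivity) (hM₂ p hpK)
  have hM₁0 : 0 ≤ M₁ := le_trans (norm_nonneg _) (hM₁ p hpK)
  set Ω := Fintype.piFinset fun i => Finset.Nat.antidiagonalTuple r (n i) with hΩ
  set W : (Fin r → Fin r → ℕ) → ℝ := fun ξ => ∏ i, multinomialWeight (P i) (ξ i) with hWdef
  have hW0 : ∀ ξ, 0 ≤ W ξ :=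
    fun ξ => Finset.prod_nonneg fun i _ => mw_nonneg (fun j => hP0 i j) _
  have hmass : ∑ ξ ∈ Ω, W ξ = 1 := S_mass P n hP1
  set qv : (Fin r → Fin r → ℕ) → Fin r → ℝ :=
    fun ξ j => ((∑ i, ξ i j : ℕ) : ℝ)/N with hqvdef
  have hrowsum : ∀ ξ ∈ Ω, ∀ i, ∑ j, ξ i j = n i := by
    intro ξ hξ i
    rw [hΩ, Fintype.mem_piFinset] at hξ
    exact Finset.Nat.mem_antidiagonalTuple.1 (hξ i)
  have hqK : ∀ ξ ∈ Ω, qv ξ ∈ stdSimplex ℝ (Fin r) := by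
    intro ξ hξ
    constructor
    · intro j; exact div_nonneg (Nat.cast_nonneg _) hN0.le
    · rw [hqvdef]
      simp only
      rw [← Finset.sum_div]
      have : ∑ j, ((∑ i, ξ i j : ℕ) : ℝ) = (N : ℝ) := by
        rw [← Nat.cast_sum]
        congr 1
        rw [Finset.sum_comm]
        rw [Finset.sum_congr rfl fun i (_ : i ∈ Finset.univ) => hrowsum ξ hξ i, hn]
      rw [this]
      field_simp
  set μ : Fin r → ℝ := fun j => ∑ i, (n i : ℝ) * P i j with hμdef
  set v : Fin r → ℝ := fun j => μ j - (n j : ℝ) with hvdef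
  have hvb : ∀ j, |v j| ≤ CA := by
    intro j
    have hμj : μ j = (n j : ℝ) + (∑ i, (n i : ℝ) * B i j) / N := by
      have e : ∀ i : Fin r, (n i:ℝ) * P i j
          = (if i = j then (n i:ℝ) else 0) + (n i:ℝ) * B i j / N := by
        intro i
        rw [hPdef i j]
        by_cases h : i = j <;> simp [h] <;> ring
      rw [hμdef]
      simp only
      rw [Finset.sum_congr rfl fun i (_ : i ∈ Finset.univ) => e i, Finset.sum_add_distrib,
        Finset.sum_ite_eq' Finset.univ j (fun i => (n i : ℝ)), ← Finset.sum_div]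
      simp
    have hv : v j = (∑ i, (n i : ℝ) * B i j) / N := by rw [hvdef]; simp only; rw [hμj]; ring
    rw [hv, abs_div, abs_of_pos hN0]
    rw [div_le_iff₀ hN0]
    calc |∑ i, (n i : ℝ) * B i j| ≤ ∑ i, |(n i : ℝ) * B i j| := Finset.abs_sum_le_sum_abs _ _
      _ ≤ ∑ i, (n i : ℝ) * CA := by
          refine Finset.sum_le_sum fun i _ => ?_
          rw [abs_mul, abs_of_nonneg (Nat.cast_nonneg _)]
          exact mul_le_mul_of_nonneg_left (hCA i j) (Nat.cast_nonneg _)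
      _ = CA * N := by rw [← Finset.sum_mul, ← Nat.cast_sum, hn]; ring
  -- centered first moments vanish
  have hcenter : ∀ j, ∑ ξ ∈ Ω, W ξ * ((∑ i, (ξ i j : ℝ)) - μ j) = 0 := by
    intro j
    have e : ∀ ξ : Fin r → Fin r → ℕ, W ξ * ((∑ i, (ξ i j : ℝ)) - μ j)
        = ∑ i, W ξ * ((ξ i j : ℝ) - (n i : ℝ) * P i j) := by
      intro ξ
      rw [← Finset.mul_sum, Finset.sum_sub_distrib]
    rw [Finset.sum_congr rfl fun ξ _ => e ξ, Finset.sum_comm]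
    rw [Finset.sum_congr rfl fun i (_ : i ∈ Finset.univ) => S_single P n hP1 j i]
    simp
  -- variance bound
  have hvarsum : ∀ j, ∑ ξ ∈ Ω, W ξ * ((∑ i, (ξ i j : ℝ)) - μ j)^2
      = ∑ i, (n i : ℝ) * P i j * (1 - P i j) := fun j => S_var P n hP1 j
  -- second moment about n j
  have hsecond : ∀ j, ∑ ξ ∈ Ω, W ξ * ((∑ i, (ξ i j : ℝ)) - (n j : ℝ))^2
      = (∑ i, (n i : ℝ) * P i j * (1 - P i j)) + (v j)^2 := by
    intro j
    have e : ∀ ξ : Fin r → Fin r → ℕ, W ξ * ((∑ i, (ξ i j : ℝ)) - (n j : ℝ))^2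
        = W ξ * ((∑ i, (ξ i j : ℝ)) - μ j)^2
          + 2 * v j * (W ξ * ((∑ i, (ξ i j : ℝ)) - μ j)) + (v j)^2 * W ξ := by
      intro ξ
      have : (∑ i, (ξ i j : ℝ)) - (n j : ℝ) = ((∑ i, (ξ i j : ℝ)) - μ j) + v j := by
        rw [hvdef]; ring
      rw [this]; ring
    rw [Finset.sum_congr rfl fun ξ _ => e ξ, Finset.sum_add_distrib, Finset.sum_add_distrib,
      ← Finset.mul_sum, ← Finset.mul_sum, hcenter, hvarsum, hmass]
    ring
  have hfirstn : ∀ j, ∑ ξ ∈ Ω, W ξ * ((∑ i, (ξ i j : ℝ)) - (n j : ℝ)) = v j := by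
    intro j
    have e : ∀ ξ : Fin r → Fin r → ℕ, W ξ * ((∑ i, (ξ i j : ℝ)) - (n j : ℝ))
        = W ξ * ((∑ i, (ξ i j : ℝ)) - μ j) + v j * W ξ := by
      intro ξ; rw [hvdef]; simp only; ring
    rw [Finset.sum_congr rfl fun ξ _ => e ξ, Finset.sum_add_distrib, hcenter,
      ← Finset.mul_sum, hmass]
    ring
  set L := fderiv ℝ f p with hLdef
  have hSOp : SOp N P (TOp N f) n = ∑ ξ ∈ Ω, W ξ * TOp N f (qv ξ) := rfl
  have hdecomp : SOp N P (TOp N f) n - f p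
      = (∑ ξ ∈ Ω, W ξ * (TOp N f (qv ξ) - f (qv ξ)))
        + (∑ ξ ∈ Ω, W ξ * (f (qv ξ) - f p)) := by
    rw [← Finset.sum_add_distrib]
    have e : ∀ ξ : Fin r → Fin r → ℕ,
        W ξ * (TOp N f (qv ξ) - f (qv ξ)) + W ξ * (f (qv ξ) - f p)
        = W ξ * TOp N f (qv ξ) - W ξ * f p := fun ξ => by ring
    rw [Finset.sum_congr rfl fun ξ _ => e ξ, Finset.sum_sub_distrib, ← Finset.sum_mul, hmass,
      one_mul, ← hSOp]
  have hI : |(N:ℝ) * ∑ ξ ∈ Ω, W ξ * (TOp N f (qv ξ) - f (qv ξ))| ≤ M₂ := by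
    rw [abs_mul, abs_of_pos hN0]
    have h1 : |∑ ξ ∈ Ω, W ξ * (TOp N f (qv ξ) - f (qv ξ))| ≤ M₂ / N := by
      refine le_trans (Finset.abs_sum_le_sum_abs _ _) ?_
      have h2 : ∀ ξ ∈ Ω, |W ξ * (TOp N f (qv ξ) - f (qv ξ))| ≤ W ξ * (M₂ / N) := by
        intro ξ hξ
        rw [abs_mul, abs_of_nonneg (hW0 ξ)]
        exact mul_le_mul_of_nonneg_left (TOp_taylor hd hd2 hM₂ N hN (hqK ξ hξ)) (hW0 ξ)
      refine le_trans (Finset.sum_le_sum h2) ?_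
      rw [← Finset.sum_mul, hmass, one_mul]
    calc (N:ℝ) * |∑ ξ ∈ Ω, W ξ * (TOp N f (qv ξ) - f (qv ξ))|
        ≤ (N:ℝ) * (M₂ / N) := mul_le_mul_of_nonneg_left h1 hN0.le
      _ = M₂ := by field_simp
  -- difference vectors
  have hqp : ∀ ξ : Fin r → Fin r → ℕ, ∀ j, qv ξ j - p j = ((∑ i, (ξ i j : ℝ)) - (n j : ℝ)) / N := by
    intro ξ j
    rw [hqvdef, hpdef]
    simp only
    rw [Nat.cast_sum]
    ring
  have hlinII : (N:ℝ) * ∑ ξ ∈ Ω, W ξ * L (qv ξ - p) = L v := by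
    have e : ∀ ξ : Fin r → Fin r → ℕ, (N:ℝ) * (W ξ * L (qv ξ - p))
        = L (W ξ • (fun j => (∑ i, (ξ i j : ℝ)) - (n j : ℝ))) := by
      intro ξ
      rw [L.map_smul, smul_eq_mul]
      have harg : (fun j => (∑ i, (ξ i j : ℝ)) - (n j : ℝ)) = (N:ℝ) • (qv ξ - p) := by
        funext j
        rw [Pi.smul_apply, Pi.sub_apply, hqp ξ j, smul_eq_mul]
        field_simp
      rw [harg, L.map_smul, smul_eq_mul]
      ring
    rw [Finset.mul_sum, Finset.sum_congr rfl fun ξ _ => e ξ, ← map_sum]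
    congr 1
    funext j
    rw [Finset.sum_apply]
    simp only [Pi.smul_apply, smul_eq_mul]
    exact hfirstn j
  have hLv : |L v| ≤ M₁ * CA := by
    have hnv : ‖v‖ ≤ CA := by
      rw [pi_norm_le_iff_of_nonneg hCA0]
      intro j
      rw [Real.norm_eq_abs]
      exact hvb j
    calc |L v| = ‖L v‖ := (Real.norm_eq_abs _).symm
      _ ≤ ‖L‖ * ‖v‖ := L.le_opNorm v
      _ ≤ M₁ * CA := mul_le_mul (hM₁ p hpK) hnv (norm_nonneg v) hM₁0
  have hvarb : (N:ℝ) * ∑ ξ ∈ Ω, W ξ * (M₂ * ∑ j, (qv ξ j - p j)^2)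
      ≤ M₂ * (1 + r * CA^2) := by
    have e : ∀ ξ : Fin r → Fin r → ℕ, W ξ * (M₂ * ∑ j, (qv ξ j - p j)^2)
        = (M₂ / (N:ℝ)^2) * ∑ j, W ξ * ((∑ i, (ξ i j : ℝ)) - (n j : ℝ))^2 := by
      intro ξ
      rw [Finset.mul_sum, Finset.mul_sum, Finset.mul_sum]
      refine Finset.sum_congr rfl fun j _ => ?_
      rw [hqp ξ j, div_pow]
      field_simp
    rw [Finset.sum_congr rfl fun ξ _ => e ξ, ← Finset.mul_sum, Finset.sum_comm]
    rw [Finset.sum_congr rfl fun j (_ : j ∈ Finset.univ) => hsecond j]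
    have hVtot : ∑ j, ((∑ i, (n i:ℝ) * P i j * (1 - P i j)) + (v j)^2)
        ≤ (N:ℝ) + r * CA^2 := by
      rw [Finset.sum_add_distrib]
      refine add_le_add ?_ ?_
      · have h1 : ∀ j i, (n i:ℝ) * P i j * (1 - P i j) ≤ (n i:ℝ) * P i j := by
          intro j i
          have h2 : 0 ≤ (n i:ℝ) * P i j := mul_nonneg (Nat.cast_nonneg _) (hP0 i j)
          nlinarith [mul_nonneg h2 (hP0 i j)]
        calc ∑ j, ∑ i, (n i:ℝ) * P i j * (1 - P i j)
            ≤ ∑ j, ∑ i, (n i:ℝ) * P i j :=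
              Finset.sum_le_sum fun j _ => Finset.sum_le_sum fun i _ => h1 j i
          _ = ∑ i, (n i:ℝ) * ∑ j, P i j := by
              rw [Finset.sum_comm]
              exact Finset.sum_congr rfl fun i _ => (Finset.mul_sum _ _ _).symm
          _ = (N:ℝ) := by
              rw [Finset.sum_congr rfl fun i (_ : i ∈ Finset.univ) => by rw [hP1 i, mul_one],
                ← Nat.cast_sum, hn]
      · calc ∑ j, (v j)^2 ≤ ∑ j : Fin r, CA^2 := by
              refine Finset.sum_le_sum fun j _ => ?_
              rw [← sq_abs]
              exact pow_le_pow_left₀ (abs_nonneg _) (hvb j) 2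
          _ = r * CA^2 := by rw [Finset.sum_const, Finset.card_univ, Fintype.card_fin,
              nsmul_eq_mul]
    calc (N:ℝ) * ((M₂ / (N:ℝ)^2) * ∑ j, ((∑ i, (n i:ℝ) * P i j * (1 - P i j)) + (v j)^2))
        ≤ (N:ℝ) * ((M₂ / (N:ℝ)^2) * ((N:ℝ) + r * CA^2)) := by
          refine mul_le_mul_of_nonneg_left (mul_le_mul_of_nonneg_left hVtot ?_) hN0.le
          positivity
      _ = M₂ * (1 + r * CA^2 / N) := by field_simp
      _ ≤ M₂ * (1 + r * CA^2) := by
          refine mul_le_mul_of_nonneg_left ?_ hM₂0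
          have : (r:ℝ) * CA^2 / N ≤ r * CA^2 := by
            rw [div_le_iff₀ hN0]
            nlinarith [mul_nonneg (Nat.cast_nonneg (α := ℝ) r) (sq_nonneg CA),
              (show (1:ℝ) ≤ N by exact_mod_cast hN)]
          linarith
  have hII : |(N:ℝ) * ∑ ξ ∈ Ω, W ξ * (f (qv ξ) - f p)|
      ≤ M₁ * CA + M₂ * (1 + r * CA^2) := by
    have hsplitII : ∑ ξ ∈ Ω, W ξ * (f (qv ξ) - f p)
        = (∑ ξ ∈ Ω, W ξ * (f (qv ξ) - f p - L (qv ξ - p)))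
          + ∑ ξ ∈ Ω, W ξ * L (qv ξ - p) := by
      rw [← Finset.sum_add_distrib]
      exact Finset.sum_congr rfl fun ξ _ => by ring
    rw [hsplitII, mul_add]
    refine le_trans (abs_add_le _ _) ?_
    rw [add_comm (M₁ * CA)]
    refine add_le_add ?_ ?_
    · -- remainder part
      rw [abs_mul, abs_of_pos hN0]
      have h1 : |∑ ξ ∈ Ω, W ξ * (f (qv ξ) - f p - L (qv ξ - p))|
          ≤ ∑ ξ ∈ Ω, W ξ * (M₂ * ∑ j, (qv ξ j - p j)^2) := by
        refine le_trans (Finset.abs_sum_le_sum_abs _ _) (Finset.sum_le_sum ?_)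
        intro ξ hξ
        rw [abs_mul, abs_of_nonneg (hW0 ξ)]
        refine mul_le_mul_of_nonneg_left ?_ (hW0 ξ)
        refine le_trans (taylor_bound hd hd2 hM₂ hpK (hqK ξ hξ)) ?_
        refine mul_le_mul_of_nonneg_left ?_ hM₂0
        refine le_trans (sup_norm_sq_le _) (le_of_eq (Finset.sum_congr rfl fun j _ => ?_))
        rw [Pi.sub_apply]
      refine le_trans (mul_le_mul_of_nonneg_left h1 hN0.le) hvarb
    · rw [hlinII]
      exact hLv
  calc |(N:ℝ) * (SOp N P (TOp N f) n - f p)|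
      = |(N:ℝ) * ∑ ξ ∈ Ω, W ξ * (TOp N f (qv ξ) - f (qv ξ))
          + (N:ℝ) * ∑ ξ ∈ Ω, W ξ * (f (qv ξ) - f p)| := by rw [hdecomp, mul_add]
    _ ≤ |(N:ℝ) * ∑ ξ ∈ Ω, W ξ * (TOp N f (qv ξ) - f (qv ξ))|
          + |(N:ℝ) * ∑ ξ ∈ Ω, W ξ * (f (qv ξ) - f p)| := abs_add_le _ _
    _ ≤ M₂ + (M₁ * CA + M₂ * (1 + r * CA^2)) := add_le_add hI hII

end MainEst

section DU

lemma frobNorm_nonneg (M : Matrix (Fin r) (Fin r) ℝ) : 0 ≤ frobNorm M :=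
  Real.sqrt_nonneg _

lemma abs_entry_le_frobNorm (M : Matrix (Fin r) (Fin r) ℝ) (i j : Fin r) :
    |M i j| ≤ frobNorm M := by
  rw [frobNorm, ← Real.sqrt_sq_eq_abs]
  refine Real.sqrt_le_sqrt ?_
  calc (M i j)^2 ≤ ∑ j', (M i j')^2 :=
        Finset.single_le_sum (f := fun j' => (M i j')^2) (fun _ _ => sq_nonneg _)
          (Finset.mem_univ j)
    _ ≤ ∑ i', ∑ j', (M i' j')^2 :=
        Finset.single_le_sum (f := fun i' => ∑ j', (M i' j')^2)
          (fun i' _ => Finset.sum_nonneg fun _ _ => sq_nonneg _) (Finset.mem_univ i)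

lemma dU_ge (x y : ℝ → Matrix (Fin r) (Fin r) ℝ) {t : ℝ} (ht : 0 ≤ t) :
    Real.exp (-t) * min (frobNorm (x t - y t)) 1 ≤ dU x y := by
  classical
  set h : ℝ → ℝ := fun s => min (frobNorm (x s - y s)) 1 with hh
  have hh0 : ∀ s, 0 ≤ h s := fun s => le_min (frobNorm_nonneg _) zero_le_one
  have hh1 : ∀ s, h s ≤ 1 := fun s => min_le_right _ _
  set g : ℝ → ℝ := fun u => sSup (h '' Set.Icc 0 u) with hg
  have hbdd : ∀ u : ℝ, BddAbove (h '' Set.Icc 0 u) := by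
    intro u
    refine ⟨1, ?_⟩
    rintro z ⟨s, _, rfl⟩
    exact hh1 s
  have hg0 : ∀ u, 0 ≤ g u := by
    intro u
    rcases le_or_gt 0 u with hu | hu
    · exact le_trans (hh0 0) (le_csSup (hbdd u) ⟨0, ⟨le_refl _, hu⟩, rfl⟩)
    · rw [hg]
      simp only
      rw [Set.Icc_eq_empty (by linarith), Set.image_empty, Real.sSup_empty]
  have hg1 : ∀ u, g u ≤ 1 := by
    intro u
    rcases le_or_gt 0 u with hu | hu
    · refine csSup_le ⟨h 0, ⟨0, ⟨le_refl _, hu⟩, rfl⟩⟩ ?_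
      rintro z ⟨s, _, rfl⟩
      exact hh1 s
    · rw [hg]
      simp only
      rw [Set.Icc_eq_empty (by linarith), Set.image_empty, Real.sSup_empty]
      exact zero_le_one
  have hgmono : Monotone g := by
    intro u₁ u₂ hu
    rcases le_or_gt 0 u₁ with h1 | h1
    · exact csSup_le_csSup (hbdd u₂) ⟨h 0, ⟨0, ⟨le_refl _, h1⟩, rfl⟩⟩
        (Set.image_mono (Set.Icc_subset_Icc_right hu))
    · have : g u₁ = 0 := by
        rw [hg]; simp only
        rw [Set.Icc_eq_empty (by linarith), Set.image_empty, Real.sSup_empty]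
      rw [this]
      exact hg0 u₂
  have hgm : Measurable g := hgmono.measurable
  have hint : MeasureTheory.IntegrableOn (fun u => Real.exp (-u) * g u) (Set.Ioi 0) := by
    have hexp : MeasureTheory.IntegrableOn (fun u => Real.exp (-u)) (Set.Ioi (0:ℝ)) := by
      have := exp_neg_integrableOn_Ioi (0:ℝ) (b := 1) one_pos
      simpa using this
    refine MeasureTheory.Integrable.mono' hexp ?_ ?_
    · exact ((Real.measurable_exp.comp measurable_neg).mul hgm).aestronglyMeasurable
    · refine Filter.Eventually.of_forall fun u => ?_
      rw [Real.norm_eq_abs, abs_mul, abs_of_pos (Real.exp_pos _),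
        abs_of_nonneg (hg0 u)]
      calc Real.exp (-u) * g u ≤ Real.exp (-u) * 1 :=
            mul_le_mul_of_nonneg_left (hg1 u) (Real.exp_pos _).le
        _ = Real.exp (-u) := mul_one _
  have hintt : MeasureTheory.IntegrableOn (fun u => Real.exp (-u) * g u) (Set.Ioi t) :=
    hint.mono_set (Set.Ioi_subset_Ioi ht)
  have hconst : MeasureTheory.IntegrableOn (fun u => Real.exp (-u) * h t) (Set.Ioi t) := by
    have : MeasureTheory.IntegrableOn (fun u => Real.exp (-u)) (Set.Ioi t) := by
      have := exp_neg_integrableOn_Ioi t (b := 1) one_pos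
      simpa using this
    exact this.mul_const _
  have hstep1 : Real.exp (-t) * h t = ∫ u in Set.Ioi t, Real.exp (-u) * h t := by
    rw [MeasureTheory.integral_mul_const, integral_exp_neg_Ioi, mul_comm]
  have hstep2 : (∫ u in Set.Ioi t, Real.exp (-u) * h t)
      ≤ ∫ u in Set.Ioi t, Real.exp (-u) * g u := by
    refine MeasureTheory.setIntegral_mono_on hconst hintt measurableSet_Ioi ?_
    intro u hu
    refine mul_le_mul_of_nonneg_left ?_ (Real.exp_pos _).le
    exact le_csSup (hbdd u) ⟨t, ⟨ht, (Set.mem_Ioi.1 hu).le⟩, rfl⟩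
  have hstep3 : (∫ u in Set.Ioi t, Real.exp (-u) * g u)
      ≤ ∫ u in Set.Ioi 0, Real.exp (-u) * g u := by
    refine MeasureTheory.setIntegral_mono_set hint ?_ ?_
    · refine Filter.Eventually.of_forall fun u => ?_
      exact mul_nonneg (Real.exp_pos _).le (hg0 u)
    · exact Filter.Eventually.of_forall fun u (hu : u ∈ Set.Ioi t) =>
        Set.mem_Ioi.2 (lt_of_le_of_lt ht (Set.mem_Ioi.1 hu))
  calc Real.exp (-t) * h t = ∫ u in Set.Ioi t, Real.exp (-u) * h t := hstep1
    _ ≤ ∫ u in Set.Ioi t, Real.exp (-u) * g u := hstep2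
    _ ≤ ∫ u in Set.Ioi 0, Real.exp (-u) * g u := hstep3
    _ = dU x y := rfl

end DU

section Cadlag

lemma bdd_on_Icc_of_cadlag (g : ℝ → ℝ) (T : ℝ)
    (hright : ∀ t : ℝ, 0 ≤ t → ContinuousWithinAt g (Set.Ici t) t)
    (hleft : ∀ t : ℝ, 0 < t → ∃ L, Filter.Tendsto g (nhdsWithin t (Set.Iio t)) (nhds L)) :
    ∃ M, ∀ t ∈ Set.Icc (0:ℝ) T, |g t| ≤ M := by
  classical
  have key : ∀ s ∈ Set.Icc (0:ℝ) T, ∃ U : Set ℝ, U ∈ nhds s ∧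
      ∃ M : ℝ, ∀ t ∈ U ∩ Set.Icc (0:ℝ) T, |g t| ≤ M := by
    intro s hs
    have hs0 : 0 ≤ s := hs.1
    have h1 : ∀ᶠ u in nhds s, u ∈ Set.Ici s → |g u| ≤ |g s| + 1 := by
      rw [← eventually_nhdsWithin_iff]
      have htend := hright s hs0
      have h2 : ∀ᶠ u in nhdsWithin s (Set.Ici s), |g u - g s| < 1 :=
        htend (by exact Metric.ball_mem_nhds (g s) one_pos : Metric.ball (g s) 1 ∈ nhds (g s))
      filter_upwards [h2] with u hu
      have := abs_sub_abs_le_abs_sub (g u) (g s)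
      linarith
    rcases eq_or_lt_of_le hs0 with hs0' | hs0'
    · obtain ⟨U, hU, hUp⟩ := h1.exists_mem
      refine ⟨U, hU, |g s| + 1, ?_⟩
      rintro t ⟨htU, ht0, _⟩
      exact hUp t htU (by rw [← hs0'] at *; exact ht0)
    · obtain ⟨L, hL⟩ := hleft s hs0'
      have h2 : ∀ᶠ u in nhds s, u ∈ Set.Iio s → |g u| ≤ |L| + 1 := by
        rw [← eventually_nhdsWithin_iff]
        have h3 : ∀ᶠ u in nhdsWithin s (Set.Iio s), |g u - L| < 1 :=
          hL (Metric.ball_mem_nhds L one_pos)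
        filter_upwards [h3] with u hu
        have := abs_sub_abs_le_abs_sub (g u) L
        linarith
      obtain ⟨U₁, hU₁, hp1⟩ := h1.exists_mem
      obtain ⟨U₂, hU₂, hp2⟩ := h2.exists_mem
      refine ⟨U₁ ∩ U₂, Filter.inter_mem hU₁ hU₂, max (|g s| + 1) (|L| + 1), ?_⟩
      rintro u ⟨⟨hu1, hu2⟩, _, _⟩
      rcases le_or_gt s u with h | h
      · exact le_trans (hp1 u hu1 h) (le_max_left _ _)
      · exact le_trans (hp2 u hu2 h) (le_max_right _ _)
  choose U hU M hM using key
  obtain ⟨F, hFcov⟩ := (isCompact_Icc (a := (0:ℝ)) (b := T)).elim_nhds_subcover'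
    (fun s hs => U s hs) (fun s hs => hU s hs)
  set φ : ↥(Set.Icc (0:ℝ) T) → ℝ := fun z => |M z.1 z.2| with hφ
  refine ⟨∑ z ∈ F, φ z, ?_⟩
  intro t ht
  obtain ⟨Us, hUs, htUs⟩ := Set.mem_iUnion₂.1 (hFcov ht)
  calc |g t| ≤ M Us.1 Us.2 := hM Us.1 Us.2 t ⟨htUs, ht⟩
    _ ≤ φ Us := le_abs_self _
    _ ≤ ∑ z ∈ F, φ z := Finset.single_le_sum (f := φ) (fun z _ => abs_nonneg _) hUs

end Cadlag

end WF

/-- Uniform boundedness of the combined one-step generators: for every C³ function `f`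
and `T > 0`,
`sup_(N≥1) sup_(0≤t≤T) sup_(p ∈ K_N) |N(U_(N,[Nt])f(p) − f(p))| < ∞`. -/
theorem combined_generator_boundedness
    (r : ℕ) (hr : 2 ≤ r)
    (A : ℕ → ℝ → Matrix (Fin r) (Fin r) ℝ)
    (Alim : ℝ → Matrix (Fin r) (Fin r) ℝ)
    (hQ : ∀ N : ℕ, 1 ≤ N → ∀ t : ℝ, 0 ≤ t → IsQMatrix (A N t))
    (hstepwise : ∀ N : ℕ, 1 ≤ N → ∀ k : ℕ, ∀ t : ℝ,
      (k : ℝ) / N ≤ t → t < ((k : ℝ) + 1) / N → A N t = A N ((k : ℝ) / N))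
    (hQlim : ∀ t : ℝ, 0 ≤ t → IsQMatrix (Alim t))
    (hcadlag_right : ∀ t : ℝ, 0 ≤ t → ContinuousWithinAt Alim (Set.Ici t) t)
    (hcadlag_left : ∀ t : ℝ, 0 < t →
      ∃ L, Filter.Tendsto Alim (nhdsWithin t (Set.Iio t)) (nhds L))
    (hstoch : ∀ N : ℕ, 1 ≤ N → ∀ k : ℕ,
      IsStochastic (1 + ((N : ℝ))⁻¹ • A N ((k : ℝ) / N)))
    (hconv : Filter.Tendsto (fun N => dU (A N) Alim) Filter.atTop (nhds 0))
    (f : (Fin r → ℝ) → ℝ) (hf : ContDiff ℝ 3 f) (T : ℝ) (hT : 0 < T) :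
    ∃ C : ℝ, ∀ N : ℕ, 1 ≤ N → ∀ t : ℝ, 0 ≤ t → t ≤ T →
      ∀ n : Fin r → ℕ, ∑ i, n i = N →
        |(N : ℝ) * (UOp N (1 + ((N : ℝ))⁻¹ • A N ((⌊(N : ℝ) * t⌋₊ : ℝ) / N)) f n
              - f fun i => (n i : ℝ) / N)| ≤ C := by
  classical
  have hd : Differentiable ℝ f := hf.differentiable (by norm_num)
  have hfd1 : ContDiff ℝ 2 (fderiv ℝ f) := hf.fderiv_right (by norm_num)
  have hd2 : Differentiable ℝ (fderiv ℝ f) := hfd1.differentiable (by norm_num)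
  have hfd2cont : Continuous (fderiv ℝ (fderiv ℝ f)) :=
    (hfd1.fderiv_right (m := 1) (by norm_num)).continuous
  obtain ⟨M₁, hM₁⟩ := (isCompact_stdSimplex ℝ (Fin r)).exists_bound_of_continuousOn
    (f := fderiv ℝ f) hfd1.continuous.continuousOn
  obtain ⟨M₂, hM₂⟩ := (isCompact_stdSimplex ℝ (Fin r)).exists_bound_of_continuousOn
    (f := fderiv ℝ (fderiv ℝ f)) hfd2cont.continuousOn
  -- bound for Alim entries on [0,T]
  obtain ⟨Mlim, hMlim⟩ : ∃ Mlim : ℝ, ∀ t ∈ Set.Icc (0:ℝ) T, ∀ i j, |Alim t i j| ≤ Mlim := by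
    have hone : ∀ i j : Fin r, ∃ M, ∀ t ∈ Set.Icc (0:ℝ) T, |Alim t i j| ≤ M := by
      intro i j
      apply WF.bdd_on_Icc_of_cadlag (fun t => Alim t i j) T
      · intro t ht
        exact (Continuous.matrix_elem continuous_id i j).continuousAt.comp_continuousWithinAt
          (hcadlag_right t ht)
      · intro t ht
        obtain ⟨L, hL⟩ := hcadlag_left t ht
        exact ⟨L i j, ((Continuous.matrix_elem continuous_id i j).tendsto L).comp hL⟩
    choose Mij hMij using hone
    refine ⟨∑ i, ∑ j, |Mij i j|, ?_⟩
    intro t ht i j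
    calc |Alim t i j| ≤ Mij i j := hMij i j t ht
      _ ≤ |Mij i j| := le_abs_self _
      _ ≤ ∑ j', |Mij i j'| :=
          Finset.single_le_sum (f := fun j' => |Mij i j'|) (fun _ _ => abs_nonneg _)
            (Finset.mem_univ j)
      _ ≤ ∑ i', ∑ j', |Mij i' j'| :=
          Finset.single_le_sum (f := fun i' => ∑ j', |Mij i' j'|)
            (fun _ _ => Finset.sum_nonneg fun _ _ => abs_nonneg _) (Finset.mem_univ i)
  have hev : ∀ᶠ N in Filter.atTop, dU (A N) Alim < Real.exp (-T) / 2 :=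
    hconv.eventually_lt_const (by positivity)
  obtain ⟨N₀, hN₀⟩ := Filter.eventually_atTop.1 hev
  set K₀ : ℕ := (N₀ + 1) * (⌊T⌋₊ + 1) + 1 with hK₀
  set Csmall : ℝ := ∑ z ∈ Finset.range (N₀+1) ×ˢ Finset.range K₀,
    ∑ i, ∑ j, |A z.1 ((z.2 : ℝ)/(z.1:ℝ)) i j| with hCs
  set CA : ℝ := max (max Csmall (Mlim + 1)) 0 with hCAdef
  have hCA0 : (0:ℝ) ≤ CA := le_max_right _ _
  have hCAbound : ∀ N : ℕ, 1 ≤ N → ∀ t : ℝ, 0 ≤ t → t ≤ T →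
      ∀ i j, |A N ((⌊(N:ℝ)*t⌋₊ : ℝ)/N) i j| ≤ CA := by
    intro N hN t ht htT i j
    have hN0 : (0:ℝ) < N := by exact_mod_cast Nat.pos_of_ne_zero (by omega)
    set s : ℝ := (⌊(N:ℝ)*t⌋₊ : ℝ)/N with hs
    have hs0 : 0 ≤ s := div_nonneg (Nat.cast_nonneg _) hN0.le
    have hsle : s ≤ t := by
      rw [hs, div_le_iff₀ hN0]
      calc (⌊(N:ℝ)*t⌋₊:ℝ) ≤ (N:ℝ)*t := Nat.floor_le (by positivity)
        _ = t * N := mul_comm _ _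
    have hsT : s ≤ T := le_trans hsle htT
    rcases le_or_gt N₀ N with hbig | hsmall
    · have hdU := hN₀ N hbig
      have hge := WF.dU_ge (A N) Alim hs0
      have hmin0 : 0 ≤ min (frobNorm (A N s - Alim s)) 1 :=
        le_min (WF.frobNorm_nonneg _) zero_le_one
      have hdU0 : 0 ≤ dU (A N) Alim :=
        le_trans (mul_nonneg (Real.exp_pos _).le hmin0) hge
      have hmin : min (frobNorm (A N s - Alim s)) 1 ≤ 1/2 := by
        have h1 : min (frobNorm (A N s - Alim s)) 1 ≤ Real.exp s * dU (A N) Alim := by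
          have h2 := mul_le_mul_of_nonneg_left hge (Real.exp_pos s).le
          calc min (frobNorm (A N s - Alim s)) 1
              = Real.exp s * (Real.exp (-s) * min (frobNorm (A N s - Alim s)) 1) := by
                rw [← mul_assoc, ← Real.exp_add]
                simp
            _ ≤ Real.exp s * dU (A N) Alim := h2
        calc min (frobNorm (A N s - Alim s)) 1
            ≤ Real.exp s * dU (A N) Alim := h1
          _ ≤ Real.exp T * dU (A N) Alim :=
              mul_le_mul_of_nonneg_right (Real.exp_le_exp.2 hsT) hdU0
          _ ≤ Real.exp T * (Real.exp (-T) / 2) :=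
              mul_le_mul_of_nonneg_left hdU.le (Real.exp_pos _).le
          _ = 1/2 := by
              rw [← mul_div_assoc, ← Real.exp_add]
              simp
      have hfrob : frobNorm (A N s - Alim s) ≤ 1/2 := by
        by_contra hcon
        push_neg at hcon
        have : (1:ℝ)/2 < min (frobNorm (A N s - Alim s)) 1 := lt_min hcon (by norm_num)
        linarith
      have h5 := WF.abs_entry_le_frobNorm (A N s - Alim s) i j
      rw [Matrix.sub_apply] at h5
      have h6 : |A N s i j| ≤ |Alim s i j| + 1/2 := by
        calc |A N s i j| = |(A N s i j - Alim s i j) + Alim s i j| := by norm_num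
          _ ≤ |A N s i j - Alim s i j| + |Alim s i j| := abs_add_le _ _
          _ ≤ 1/2 + |Alim s i j| := by linarith [le_trans h5 hfrob]
          _ = |Alim s i j| + 1/2 := by ring
      calc |A N s i j| ≤ |Alim s i j| + 1/2 := h6
        _ ≤ Mlim + 1 := by linarith [hMlim s ⟨hs0, hsT⟩ i j]
        _ ≤ CA := le_trans (le_max_right Csmall _) (le_max_left _ 0)
    · set k : ℕ := ⌊(N:ℝ)*t⌋₊ with hk
      have hkK : k < K₀ := by
        have h6 : (k:ℝ) ≤ (N:ℝ) * t := Nat.floor_le (by positivity)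
        have hTfl : T < (⌊T⌋₊ : ℝ) + 1 := Nat.lt_floor_add_one T
        have hNle : (N:ℝ) ≤ (N₀:ℝ) := by exact_mod_cast hsmall.le
        have h7 : (k:ℝ) < ((N₀+1) * (⌊T⌋₊+1) : ℕ) := by
          push_cast
          have hNT : (N:ℝ) * t ≤ (N₀:ℝ) * T := by
            have h8 : (N:ℝ) * t ≤ (N:ℝ) * T := mul_le_mul_of_nonneg_left htT hN0.le
            have h9 : (N:ℝ) * T ≤ (N₀:ℝ) * T := mul_le_mul_of_nonneg_right hNle hT.le
            linarith
          nlinarith [Nat.cast_nonneg (α := ℝ) N₀, Nat.cast_nonneg (α := ℝ) ⌊T⌋₊]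
        have h10 : k < (N₀+1) * (⌊T⌋₊+1) := by exact_mod_cast h7
        omega
      have hmem : (N, k) ∈ Finset.range (N₀+1) ×ˢ Finset.range K₀ :=
        Finset.mem_product.2 ⟨Finset.mem_range.2 (by omega), Finset.mem_range.2 hkK⟩
      have h7 : |A N ((k:ℝ)/N) i j| ≤ ∑ i', ∑ j', |A N ((k:ℝ)/N) i' j'| := by
        calc |A N ((k:ℝ)/N) i j| ≤ ∑ j', |A N ((k:ℝ)/N) i j'| :=
              Finset.single_le_sum (f := fun j' => |A N ((k:ℝ)/N) i j'|)
                (fun _ _ => abs_nonneg _) (Finset.mem_univ j)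
          _ ≤ ∑ i', ∑ j', |A N ((k:ℝ)/N) i' j'| :=
              Finset.single_le_sum (f := fun i' => ∑ j', |A N ((k:ℝ)/N) i' j'|)
                (fun _ _ => Finset.sum_nonneg fun _ _ => abs_nonneg _) (Finset.mem_univ i)
      have h8 : ∑ i', ∑ j', |A N ((k:ℝ)/N) i' j'| ≤ Csmall := by
        rw [hCs]
        exact Finset.single_le_sum
          (f := fun z : ℕ × ℕ => ∑ i', ∑ j', |A z.1 ((z.2 : ℝ)/(z.1:ℝ)) i' j'|)
          (fun _ _ => Finset.sum_nonneg fun _ _ => Finset.sum_nonneg fun _ _ => abs_nonneg _)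
          hmem
      calc |A N ((k:ℝ)/N) i j| ≤ Csmall := le_trans h7 h8
        _ ≤ CA := le_trans (le_max_left _ _) (le_max_left _ 0)
  refine ⟨M₂ + (M₁ * CA + M₂ * (1 + r * CA^2)), ?_⟩
  intro N hN t ht htT n hn
  have hN0 : (0:ℝ) < N := by exact_mod_cast Nat.pos_of_ne_zero (by omega)
  obtain ⟨hP0, hP1⟩ := hstoch N hN ⌊(N:ℝ)*t⌋₊
  have hPdef : ∀ i j, (1 + ((N : ℝ))⁻¹ • A N ((⌊(N:ℝ)*t⌋₊ : ℝ)/N)) i j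
      = (if i = j then (1:ℝ) else 0) + A N ((⌊(N:ℝ)*t⌋₊ : ℝ)/N) i j / N := by
    intro i j
    rw [Matrix.add_apply, Matrix.smul_apply, Matrix.one_apply, smul_eq_mul]
    ring
  exact WF.main_est N hN (A N ((⌊(N:ℝ)*t⌋₊ : ℝ)/N)) _ hPdef hP0 hP1 CA hCA0
    (hCAbound N hN t ht htT) hd hd2 hM₁ hM₂ n hn
end
end

section
/- Let A be a continuous Q-matrix-valued function on [0,∞) and let Y be a K-valued progressively measurable process on a filtered probability space that solves the martingale problem for G_AB = G_A + G_B on C³. Then for every multi-index α ∈ ℤ_+^r with n = |α| ≥ 1 and every t ≥ 0, E[ ∏_i Y_i(t)^{α_i} ] = E[ ∏_i Y_i(0)^{α_i} ] + ∫_0^t { (1/2) Σ_{i=1}^r α_i(α_i − 1) E[ ∏_l Y_l(s)^{α_l − δ_{l,i}} ] − (1/2)(n² − n) E[ ∏_l Y_l(s)^{α_l} ] + Σ_{j=1}^r α_j a_{j,j}(s) E[ ∏_l Y_l(s)^{α_l} ] + Σ_{k=1}^r Σ_{j ≠ k} α_j a_{k,j}(s) E[ ∏_l Y_l(s)^{α_l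 − δ_{l,j} + δ_{l,k}} ] } ds. -/
open scoped BigOperators NNReal
open Finset MeasureTheory

noncomputable section

section AuxiliaryLemmas

variable {r : ℕ}

def mono (β : Fin r → ℕ) (x : Fin r → ℝ) : ℝ := ∏ l, x l ^ β l

def dec (β : Fin r → ℕ) (j : Fin r) : Fin r → ℕ := fun l => β l - if l = j then 1 else 0

def inc (β : Fin r → ℕ) (k : Fin r) : Fin r → ℕ := fun l => β l + if l = k then 1 else 0

lemma contDiff_mono (β : Fin r → ℕ) (n : ℕ∞) : ContDiff ℝ n (mono β) :=
  contDiff_prod fun i _ => ((ContinuousLinearMap.proj i : ((Fin r → ℝ)) →L[ℝ] ℝ).contDiff).pow _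

lemma continuous_mono (β : Fin r → ℕ) : Continuous (mono β) :=
  (contDiff_mono β 0).continuous

lemma mono_dec_eq (β : Fin r → ℕ) (i : Fin r) (p : Fin r → ℝ) :
    mono (dec β i) p = p i ^ (β i - 1) * ∏ l ∈ univ.erase i, p l ^ β l := by
  rw [mono, ← Finset.mul_prod_erase univ _ (mem_univ i)]
  simp only [dec, if_pos rfl]
  congr 1
  refine Finset.prod_congr rfl fun l hl => ?_
  rw [if_neg (Finset.ne_of_mem_erase hl), Nat.sub_zero]

lemma hasFDerivAt_mono (β : Fin r → ℕ) (p : Fin r → ℝ) :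
    HasFDerivAt (mono β)
      (∑ i, ((β i : ℝ) * mono (dec β i) p) • (ContinuousLinearMap.proj i : ((Fin r → ℝ)) →L[ℝ] ℝ))
      p := by
  have h : ∀ i ∈ (univ : Finset (Fin r)), HasFDerivAt (fun x : Fin r → ℝ => x i ^ β i)
      (((β i : ℝ) * p i ^ (β i - 1)) • (ContinuousLinearMap.proj i : ((Fin r → ℝ)) →L[ℝ] ℝ)) p := by
    intro i _
    have := (hasDerivAt_pow (β i) (p i)).comp_hasFDerivAt p
      ((ContinuousLinearMap.proj i : ((Fin r → ℝ)) →L[ℝ] ℝ).hasFDerivAt)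
    exact this
  have hd := HasFDerivAt.finset_prod h
  have e : (∑ i, ((β i : ℝ) * mono (dec β i) p) • (ContinuousLinearMap.proj i : ((Fin r → ℝ)) →L[ℝ] ℝ))
      = ∑ i, (∏ j ∈ univ.erase i, p j ^ β j) • (((β i : ℝ) * p i ^ (β i - 1)) • (ContinuousLinearMap.proj i : ((Fin r → ℝ)) →L[ℝ] ℝ)) := by
    refine Finset.sum_congr rfl fun i _ => ?_
    rw [smul_smul]
    congr 1
    rw [mono_dec_eq]
    ring
  rw [e]
  exact hd

lemma fderiv_mono_apply (β : Fin r → ℕ) (p : Fin r → ℝ) (j : Fin r) :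
    fderiv ℝ (mono β) p (Pi.single j 1) = (β j : ℝ) * mono (dec β j) p := by
  rw [(hasFDerivAt_mono β p).fderiv]
  rw [ContinuousLinearMap.sum_apply]
  have : ∀ i, (((β i : ℝ) * mono (dec β i) p) • (ContinuousLinearMap.proj i : ((Fin r → ℝ)) →L[ℝ] ℝ))
      (Pi.single j 1) = if i = j then (β i : ℝ) * mono (dec β i) p else 0 := by
    intro i
    simp [ContinuousLinearMap.proj_apply, Pi.single_apply, eq_comm]
  simp_rw [this]
  simp

lemma fderiv_fderiv_mono (β : Fin r → ℕ) (p : Fin r → ℝ) (i j : Fin r) :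
    fderiv ℝ (fun x => fderiv ℝ (mono β) x (Pi.single j 1)) p (Pi.single i 1)
      = (β j : ℝ) * ((dec β j i : ℝ) * mono (dec (dec β j) i) p) := by
  have h : (fun x => fderiv ℝ (mono β) x (Pi.single j 1))
      = fun x => (β j : ℝ) * mono (dec β j) x := funext fun x => fderiv_mono_apply β x j
  rw [h, fderiv_const_mul (hasFDerivAt_mono (dec β j) p).differentiableAt]
  rw [ContinuousLinearMap.smul_apply, fderiv_mono_apply]
  simp [mul_assoc]

lemma mul_mono_inc (β : Fin r → ℕ) (k : Fin r) (p : Fin r → ℝ) :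
    p k * mono β p = mono (inc β k) p := by
  rw [mono, mono, ← Finset.mul_prod_erase univ (fun l => p l ^ β l) (mem_univ k),
    ← Finset.mul_prod_erase univ (fun l => p l ^ inc β k l) (mem_univ k)]
  have h1 : inc β k k = β k + 1 := by simp [inc]
  have h2 : ∏ l ∈ univ.erase k, p l ^ inc β k l = ∏ l ∈ univ.erase k, p l ^ β l := by
    refine Finset.prod_congr rfl fun l hl => ?_
    rw [inc, if_neg (Finset.ne_of_mem_erase hl), Nat.add_zero]
  rw [h1, h2, pow_succ]
  ring

lemma mono_congr {β γ : Fin r → ℕ} (p : Fin r → ℝ) (h : ∀ l, β l = γ l) :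
    mono β p = mono γ p := by
  have : β = γ := funext h
  rw [this]

lemma mono_nonneg {β : Fin r → ℕ} {p : Fin r → ℝ} (h : ∀ i, 0 ≤ p i) : 0 ≤ mono β p :=
  Finset.prod_nonneg fun l _ => pow_nonneg (h l) _

lemma mono_le_one {β : Fin r → ℕ} {p : Fin r → ℝ} (h0 : ∀ i, 0 ≤ p i) (h1 : ∀ i, p i ≤ 1) :
    mono β p ≤ 1 :=
  Finset.prod_le_one (fun l _ => pow_nonneg (h0 l) _) fun l _ => pow_le_one₀ (h0 l) (h1 l)

lemma GA_mono (M : Matrix (Fin r) (Fin r) ℝ) (α : Fin r → ℕ) (p : Fin r → ℝ) :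
    GA M (mono α) p
      = (∑ j, (α j : ℝ) * M j j * mono α p)
        + ∑ k, ∑ j ∈ univ.erase k, (α j : ℝ) * M k j * mono (inc (dec α j) k) p := by
  rw [GA]
  simp_rw [fderiv_mono_apply]
  have split : ∀ i : Fin r, ∑ j, p i * M i j * ((α j : ℝ) * mono (dec α j) p)
      = p i * M i i * ((α i : ℝ) * mono (dec α i) p)
        + ∑ j ∈ univ.erase i, p i * M i j * ((α j : ℝ) * mono (dec α j) p) := by
    intro i
    exact (Finset.add_sum_erase univ _ (mem_univ i)).symm
  simp_rw [split]
  rw [Finset.sum_add_distrib]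
  congr 1
  · refine Finset.sum_congr rfl fun i _ => ?_
    rcases Nat.eq_zero_or_pos (α i) with h | h
    · simp [h]
    · have e : p i * mono (dec α i) p = mono α p := by
        rw [mul_mono_inc]
        exact mono_congr p fun l => by
          by_cases hl : l = i <;> simp [inc, dec, hl] <;> omega
      linear_combination (α i : ℝ) * M i i * e
  · refine Finset.sum_congr rfl fun k _ => Finset.sum_congr rfl fun j hj => ?_
    rw [← mul_mono_inc]
    ring

lemma GB_term (α : Fin r → ℕ) (p : Fin r → ℝ) (i j : Fin r) :
    p i * ((if i = j then (1:ℝ) else 0) - p j) *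
        ((α j : ℝ) * ((dec α j i : ℕ) : ℝ) * mono (dec (dec α j) i) p)
      = (if i = j then ((α i : ℝ) * ((α i : ℝ) - 1)) * mono (dec α i) p else 0)
        - (α j : ℝ) * ((α i : ℝ) - if i = j then 1 else 0) * mono α p := by
  by_cases hij : i = j
  · subst hij
    simp only [eq_self_iff_true, if_true]
    have hd : (dec α i i : ℕ) = α i - 1 := by simp [dec]
    rcases Nat.lt_or_ge (α i) 2 with h2 | h2
    · rcases (by omega : α i = 0 ∨ α i = 1) with h | h <;>
        · rw [hd, h]
          norm_num
    · have ccast : ((α i - 1 : ℕ) : ℝ) = (α i : ℝ) - 1 := by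
        push_cast [Nat.cast_sub (by omega : 1 ≤ α i)]; ring
      have c1 : p i * mono (dec (dec α i) i) p = mono (dec α i) p := by
        rw [mul_mono_inc]
        exact mono_congr p fun l => by
          by_cases hl : l = i <;> simp [inc, dec, hl] <;> omega
      have c2 : p i * (p i * mono (dec (dec α i) i) p) = mono α p := by
        rw [c1, mul_mono_inc]
        exact mono_congr p fun l => by
          by_cases hl : l = i <;> simp [inc, dec, hl] <;> omega
      rw [hd, ccast]
      linear_combination ((α i : ℝ) * ((α i : ℝ) - 1)) * c1 -
        ((α i : ℝ) * ((α i : ℝ) - 1)) * c2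
  · simp only [if_neg hij]
    have hd : (dec α j i : ℕ) = α i := by simp [dec, hij]
    rcases Nat.eq_zero_or_pos (α i) with hi | hi
    · rw [hd, hi]; norm_num
    rcases Nat.eq_zero_or_pos (α j) with hj | hj
    · rw [hd, hj]; norm_num
    have e : p i * (p j * mono (dec (dec α j) i) p) = mono α p := by
      rw [mul_mono_inc, mul_mono_inc]
      exact mono_congr p fun l => by
        by_cases h1 : l = i <;> by_cases h2 : l = j <;>
          simp [inc, dec, h1, h2, hij, Ne.symm hij] <;> omega
    rw [hd]
    linear_combination (-(α j : ℝ) * (α i : ℝ)) * e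

lemma GB_mono (α : Fin r → ℕ) (p : Fin r → ℝ) :
    GB (mono α) p
      = (1 / 2) * ∑ i, ((α i : ℝ) * ((α i : ℝ) - 1)) * mono (dec α i) p
        - (1 / 2) * (((∑ i, α i : ℕ) : ℝ) ^ 2 - ((∑ i, α i : ℕ) : ℝ)) * mono α p := by
  rw [GB]
  simp_rw [fderiv_fderiv_mono]
  have step : ∀ i j : Fin r,
      p i * ((if i = j then (1:ℝ) else 0) - p j) *
          ((α j : ℝ) * (((dec α j i : ℕ) : ℝ) * mono (dec (dec α j) i) p))
        = (if i = j then ((α i : ℝ) * ((α i : ℝ) - 1)) * mono (dec α i) p else 0)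
          - (α j : ℝ) * ((α i : ℝ) - if i = j then 1 else 0) * mono α p := by
    intro i j
    rw [← GB_term α p i j]
    ring
  simp_rw [step, Finset.sum_sub_distrib]
  have h1 : ∀ i : Fin r,
      (∑ j, if i = j then ((α i : ℝ) * ((α i : ℝ) - 1)) * mono (dec α i) p else 0)
        = ((α i : ℝ) * ((α i : ℝ) - 1)) * mono (dec α i) p := by
    intro i
    rw [Finset.sum_ite_eq univ i (fun _ => ((α i : ℝ) * ((α i : ℝ) - 1)) * mono (dec α i) p)]
    simp
  simp_rw [h1]
  have h2 : ∑ i, ∑ j, (α j : ℝ) * ((α i : ℝ) - if i = j then 1 else 0) * mono α p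
      = (((∑ i, α i : ℕ) : ℝ) ^ 2 - ((∑ i, α i : ℕ) : ℝ)) * mono α p := by
    have inner : ∀ i : Fin r, ∑ j, (α j : ℝ) * ((α i : ℝ) - if i = j then 1 else 0) * mono α p
        = ((∑ j, (α j : ℝ)) * (α i : ℝ) - (α i : ℝ)) * mono α p := by
      intro i
      rw [← Finset.sum_mul]
      congr 1
      have : ∀ j : Fin r, (α j : ℝ) * ((α i : ℝ) - if i = j then 1 else 0)
          = (α j : ℝ) * (α i : ℝ) - (if i = j then (α j : ℝ) else 0) := by
        intro j
        by_cases h : i = j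
        · subst h; simp; ring
        · simp [h]
      simp_rw [this, Finset.sum_sub_distrib, ← Finset.sum_mul]
      rw [Finset.sum_ite_eq univ i (fun j => (α j : ℝ))]
      simp
    simp_rw [inner]
    rw [← Finset.sum_mul]
    congr 1
    rw [Finset.sum_sub_distrib, ← Finset.mul_sum]
    push_cast
    ring
  rw [h2]
  ring

def Phi (M : Matrix (Fin r) (Fin r) ℝ) (α : Fin r → ℕ) (p : Fin r → ℝ) : ℝ :=
  (1 / 2) * ∑ i, ((α i : ℝ) * ((α i : ℝ) - 1)) * mono (dec α i) p
    - (1 / 2) * (((∑ i, α i : ℕ) : ℝ) ^ 2 - ((∑ i, α i : ℕ) : ℝ)) * mono α p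
    + (∑ j, (α j : ℝ) * M j j * mono α p)
    + ∑ k, ∑ j ∈ univ.erase k, (α j : ℝ) * M k j * mono (inc (dec α j) k) p

lemma generator_eq (M : Matrix (Fin r) (Fin r) ℝ) (α : Fin r → ℕ) (p : Fin r → ℝ) :
    GA M (mono α) p + GB (mono α) p = Phi M α p := by
  rw [GA_mono, GB_mono, Phi]
  ring

def PhiC (α : Fin r → ℕ) (C₀ : ℝ) : ℝ :=
  (1 / 2) * ∑ i, |(α i : ℝ) * ((α i : ℝ) - 1)|
    + (1 / 2) * |((∑ i, α i : ℕ) : ℝ) ^ 2 - ((∑ i, α i : ℕ) : ℝ)|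
    + (∑ j, (α j : ℝ) * C₀)
    + ∑ k, ∑ j ∈ univ.erase k, (α j : ℝ) * C₀

lemma Phi_abs_le (M : Matrix (Fin r) (Fin r) ℝ) (α : Fin r → ℕ) (p : Fin r → ℝ) (C₀ : ℝ)
    (hC₀ : 0 ≤ C₀) (hM : ∀ k j, |M k j| ≤ C₀) (h0 : ∀ i, 0 ≤ p i) (h1 : ∀ i, p i ≤ 1) :
    |Phi M α p| ≤ PhiC α C₀ := by
  have hm : ∀ β : Fin r → ℕ, |mono β p| ≤ 1 := fun β => by
    rw [abs_of_nonneg (mono_nonneg h0)]; exact mono_le_one h0 h1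
  have b1 : |(1 / 2 : ℝ) * ∑ i, ((α i : ℝ) * ((α i : ℝ) - 1)) * mono (dec α i) p|
      ≤ (1 / 2) * ∑ i, |(α i : ℝ) * ((α i : ℝ) - 1)| := by
    rw [abs_mul, abs_of_nonneg (by norm_num : (0:ℝ) ≤ 1/2)]
    refine mul_le_mul_of_nonneg_left ((Finset.abs_sum_le_sum_abs _ _).trans
      (Finset.sum_le_sum fun i _ => ?_)) (by norm_num)
    rw [abs_mul]
    exact mul_le_of_le_one_right (abs_nonneg _) (hm _)
  have b2 : |(1 / 2 : ℝ) * (((∑ i, α i : ℕ) : ℝ) ^ 2 - ((∑ i, α i : ℕ) : ℝ)) * mono α p|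
      ≤ (1 / 2) * |((∑ i, α i : ℕ) : ℝ) ^ 2 - ((∑ i, α i : ℕ) : ℝ)| := by
    rw [abs_mul, abs_mul, abs_of_nonneg (by norm_num : (0:ℝ) ≤ 1/2)]
    rw [mul_assoc]
    refine mul_le_mul_of_nonneg_left ?_ (by norm_num)
    exact mul_le_of_le_one_right (abs_nonneg _) (hm _)
  have b3 : |∑ j, (α j : ℝ) * M j j * mono α p| ≤ ∑ j, (α j : ℝ) * C₀ := by
    refine (Finset.abs_sum_le_sum_abs _ _).trans (Finset.sum_le_sum fun j _ => ?_)
    rw [abs_mul, abs_mul, Nat.abs_cast]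
    calc (α j : ℝ) * |M j j| * |mono α p| ≤ (α j : ℝ) * C₀ * 1 := by
          refine mul_le_mul (mul_le_mul_of_nonneg_left (hM j j) (Nat.cast_nonneg _)) (hm _)
            (abs_nonneg _) (by positivity)
      _ = (α j : ℝ) * C₀ := mul_one _
  have b4 : |∑ k, ∑ j ∈ univ.erase k, (α j : ℝ) * M k j * mono (inc (dec α j) k) p|
      ≤ ∑ k, ∑ j ∈ univ.erase k, (α j : ℝ) * C₀ := by
    refine (Finset.abs_sum_le_sum_abs _ _).trans (Finset.sum_le_sum fun k _ => ?_)
    refine (Finset.abs_sum_le_sum_abs _ _).trans (Finset.sum_le_sum fun j _ => ?_)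
    rw [abs_mul, abs_mul, Nat.abs_cast]
    calc (α j : ℝ) * |M k j| * |mono (inc (dec α j) k) p| ≤ (α j : ℝ) * C₀ * 1 := by
          refine mul_le_mul (mul_le_mul_of_nonneg_left (hM k j) (Nat.cast_nonneg _)) (hm _)
            (abs_nonneg _) (by positivity)
      _ = (α j : ℝ) * C₀ := mul_one _
  rw [Phi, PhiC]
  calc |(1 / 2 : ℝ) * ∑ i, ((α i : ℝ) * ((α i : ℝ) - 1)) * mono (dec α i) p
        - (1 / 2) * (((∑ i, α i : ℕ) : ℝ) ^ 2 - ((∑ i, α i : ℕ) : ℝ)) * mono α p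
        + (∑ j, (α j : ℝ) * M j j * mono α p)
        + ∑ k, ∑ j ∈ univ.erase k, (α j : ℝ) * M k j * mono (inc (dec α j) k) p|
      ≤ |(1 / 2 : ℝ) * ∑ i, ((α i : ℝ) * ((α i : ℝ) - 1)) * mono (dec α i) p
        - (1 / 2) * (((∑ i, α i : ℕ) : ℝ) ^ 2 - ((∑ i, α i : ℕ) : ℝ)) * mono α p
        + (∑ j, (α j : ℝ) * M j j * mono α p)|
        + |∑ k, ∑ j ∈ univ.erase k, (α j : ℝ) * M k j * mono (inc (dec α j) k) p| :=
        abs_add_le _ _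
    _ ≤ (|(1 / 2 : ℝ) * ∑ i, ((α i : ℝ) * ((α i : ℝ) - 1)) * mono (dec α i) p
        - (1 / 2) * (((∑ i, α i : ℕ) : ℝ) ^ 2 - ((∑ i, α i : ℕ) : ℝ)) * mono α p|
        + |∑ j, (α j : ℝ) * M j j * mono α p|)
        + |∑ k, ∑ j ∈ univ.erase k, (α j : ℝ) * M k j * mono (inc (dec α j) k) p| := by
        gcongr
        exact abs_add_le _ _
    _ ≤ ((|(1 / 2 : ℝ) * ∑ i, ((α i : ℝ) * ((α i : ℝ) - 1)) * mono (dec α i) p|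
        + |(1 / 2) * (((∑ i, α i : ℕ) : ℝ) ^ 2 - ((∑ i, α i : ℕ) : ℝ)) * mono α p|)
        + |∑ j, (α j : ℝ) * M j j * mono α p|)
        + |∑ k, ∑ j ∈ univ.erase k, (α j : ℝ) * M k j * mono (inc (dec α j) k) p| := by
        gcongr
        exact abs_sub _ _
    _ ≤ _ := by
        refine add_le_add (add_le_add (add_le_add b1 b2) b3) b4
end AuxiliaryLemmas

/-- Moment evolution equation for a solution of the martingale problem for
`G_AB = G_A + G_B` on C³ functions, with `A` a continuous Q-matrix-valued path:
for every multi-index `α` with `n = |α| ≥ 1` and every `t ≥ 0`,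
`E[∏ᵢ Yᵢ(t)^αᵢ]` equals `E[∏ᵢ Yᵢ(0)^αᵢ]` plus the time integral of the displayed
combination of moments. -/
theorem moment_evolution_equation
    (r : ℕ) (hr : 2 ≤ r)
    (A : ℝ → Matrix (Fin r) (Fin r) ℝ)
    (hAcont : Continuous A)
    (hAQ : ∀ t : ℝ, 0 ≤ t → IsQMatrix (A t))
    {Ω : Type*} {mΩ : MeasurableSpace Ω} (μ : Measure Ω) [IsProbabilityMeasure μ]
    (ℱ : Filtration ℝ≥0 mΩ)
    (Y : ℝ≥0 → Ω → (Fin r → ℝ))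
    (hprog : ProgMeasurable ℱ Y)
    (hK : ∀ t ω, (∀ i, 0 ≤ Y t ω i) ∧ ∑ i, Y t ω i = 1)
    (hmart : ∀ f : (Fin r → ℝ) → ℝ, ContDiff ℝ 3 f →
      Martingale
        (fun t ω => f (Y t ω) -
          ∫ s in (0:ℝ)..(t:ℝ), (GA (A s) f (Y s.toNNReal ω) + GB f (Y s.toNNReal ω)))
        ℱ μ)
    (α : Fin r → ℕ) (hα : 1 ≤ ∑ i, α i) (t : ℝ≥0) :
    (∫ ω, ∏ i, (Y t ω i) ^ α i ∂μ)
      = (∫ ω, ∏ i, (Y 0 ω i) ^ α i ∂μ)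
        + ∫ s in (0:ℝ)..(t:ℝ),
            ((1 / 2) * ∑ i, ((α i : ℝ) * ((α i : ℝ) - 1)) *
                (∫ ω, ∏ l, (Y s.toNNReal ω l) ^ (α l - if l = i then 1 else 0) ∂μ)
             - (1 / 2) * (((∑ i, α i : ℕ) : ℝ) ^ 2 - ((∑ i, α i : ℕ) : ℝ)) *
                (∫ ω, ∏ l, (Y s.toNNReal ω l) ^ α l ∂μ)
             + (∑ j, (α j : ℝ) * A s j j * (∫ ω, ∏ l, (Y s.toNNReal ω l) ^ α l ∂μ))
             + ∑ k, ∑ j ∈ Finset.univ.erase k, (α j : ℝ) * A s k j *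
                (∫ ω, ∏ l, (Y s.toNNReal ω l) ^
                    (α l - (if l = j then 1 else 0) + if l = k then 1 else 0) ∂μ)) := by
  -- basic facts about Y
  have hY0 : ∀ (u : ℝ≥0) ω i, 0 ≤ Y u ω i := fun u ω i => (hK u ω).1 i
  have hY1 : ∀ (u : ℝ≥0) ω i, Y u ω i ≤ 1 := by
    intro u ω i
    have h2 := (hK u ω).2
    have h3 : Y u ω i ≤ ∑ j, Y u ω j :=
      Finset.single_le_sum (f := fun j => Y u ω j) (fun j _ => (hK u ω).1 j) (mem_univ i)
    linarith
  have hmeasY : ∀ u : ℝ≥0, StronglyMeasurable (Y u) :=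
    fun u => ((IsStronglyProgressive.stronglyAdapted hprog u)).mono (ℱ.le u)
  have hmeasMono : ∀ (u : ℝ≥0) (β : Fin r → ℕ),
      AEStronglyMeasurable (fun ω => mono β (Y u ω)) μ :=
    fun u β => ((continuous_mono β).comp_stronglyMeasurable (hmeasY u)).aestronglyMeasurable
  have hintMono : ∀ (u : ℝ≥0) (β : Fin r → ℕ),
      Integrable (fun ω => mono β (Y u ω)) μ := by
    intro u β
    refine (integrable_const (1:ℝ)).mono' (hmeasMono u β)
      (Filter.Eventually.of_forall fun ω => ?_)
    rw [Real.norm_eq_abs, abs_of_nonneg (mono_nonneg (hY0 u ω))]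
    exact mono_le_one (hY0 u ω) (hY1 u ω)
  -- the martingale
  have hf3 : ContDiff ℝ 3 (mono α) := contDiff_mono α 3
  have hM := hmart (mono α) hf3
  -- constant expectation
  have key : ∫ ω, (mono α (Y t ω) -
        ∫ s in (0:ℝ)..(t:ℝ), (GA (A s) (mono α) (Y s.toNNReal ω)
          + GB (mono α) (Y s.toNNReal ω))) ∂μ
      = ∫ ω, mono α (Y 0 ω) ∂μ := by
    have h1 := hM.condExp_ae_eq (zero_le : (0:ℝ≥0) ≤ t)
    calc ∫ ω, (mono α (Y t ω) -
          ∫ s in (0:ℝ)..(t:ℝ), (GA (A s) (mono α) (Y s.toNNReal ω)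
            + GB (mono α) (Y s.toNNReal ω))) ∂μ
        = ∫ ω, (μ[(fun ω => mono α (Y t ω) -
            ∫ s in (0:ℝ)..(t:ℝ), (GA (A s) (mono α) (Y s.toNNReal ω)
              + GB (mono α) (Y s.toNNReal ω))) | ℱ 0]) ω ∂μ :=
          (integral_condExp (ℱ.le 0)).symm
      _ = ∫ ω, (mono α (Y 0 ω) -
            ∫ s in (0:ℝ)..((0:ℝ≥0):ℝ), (GA (A s) (mono α) (Y s.toNNReal ω)
              + GB (mono α) (Y s.toNNReal ω))) ∂μ := integral_congr_ae h1
      _ = ∫ ω, mono α (Y 0 ω) ∂μ := by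
          refine integral_congr_ae (Filter.Eventually.of_forall fun ω => ?_)
          simp
  -- integrability of the time integral
  have hintI : Integrable (fun ω => ∫ s in (0:ℝ)..(t:ℝ),
      (GA (A s) (mono α) (Y s.toNNReal ω) + GB (mono α) (Y s.toNNReal ω))) μ := by
    have h := (hintMono t α).sub (hM.integrable t)
    refine h.congr (Filter.Eventually.of_forall fun ω => ?_)
    simp
  have step1 : ∫ ω, mono α (Y t ω) ∂μ
      = ∫ ω, mono α (Y 0 ω) ∂μ
        + ∫ ω, (∫ s in (0:ℝ)..(t:ℝ), (GA (A s) (mono α) (Y s.toNNReal ω)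
            + GB (mono α) (Y s.toNNReal ω))) ∂μ := by
    have h := integral_sub (hintMono t α) hintI
    rw [key] at h
    linarith
  -- uniform bound on the matrix entries
  obtain ⟨C₀, hC₀pos, hC₀⟩ : ∃ C₀ : ℝ, 0 ≤ C₀ ∧
      ∀ s ∈ Set.Icc (0:ℝ) (t:ℝ), ∀ k j, |A s k j| ≤ C₀ := by
    have hcont : Continuous fun s : ℝ => ∑ k, ∑ j, |A s k j| :=
      continuous_finset_sum _ fun k _ => continuous_finset_sum _ fun j _ =>
        (hAcont.matrix_elem k j).abs
    obtain ⟨C, hC⟩ :=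
      (isCompact_Icc (a := (0:ℝ)) (b := (t:ℝ))).exists_bound_of_continuousOn
        hcont.continuousOn
    refine ⟨max C 0, le_max_right _ _, fun s hs k j => ?_⟩
    have h1 : |A s k j| ≤ ∑ j', |A s k j'| :=
      Finset.single_le_sum (f := fun j' => |A s k j'|) (fun j' _ => abs_nonneg _) (mem_univ j)
    have h2 : ∑ j', |A s k j'| ≤ ∑ k', ∑ j', |A s k' j'| :=
      Finset.single_le_sum (f := fun k' => ∑ j', |A s k' j'|)
        (fun k' _ => Finset.sum_nonneg fun _ _ => abs_nonneg _) (mem_univ k)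
    have h3 := hC s hs
    rw [Real.norm_eq_abs] at h3
    have h4 := le_abs_self (∑ k', ∑ j', |A s k' j'|)
    have h5 := le_max_left C 0
    linarith
  set I : Set ℝ := Set.Ioc (0:ℝ) (t:ℝ) with hI
  haveI : IsFiniteMeasure ((volume : Measure ℝ).restrict I) := by
    constructor
    rw [Measure.restrict_apply_univ]
    simp only [hI, Real.volume_Ioc]
    exact ENNReal.ofReal_lt_top
  -- a.e. membership of the second coordinate
  have hae : ∀ᵐ q ∂(μ.prod ((volume : Measure ℝ).restrict I)), q.2 ∈ I := by
    rw [ae_iff]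
    have hset : {q : Ω × ℝ | ¬ q.2 ∈ I} = Set.univ ×ˢ Iᶜ := by ext q; simp
    rw [hset, Measure.prod_prod, Measure.restrict_apply measurableSet_Ioc.compl]
    simp [hI]
  -- joint measurability
  have hY2 : StronglyMeasurable fun q : Ω × ℝ => Y (min q.2.toNNReal t) q.1 := by
    have hι : @Measurable (Ω × ℝ) (↥(Set.Iic t) × Ω) _
        (Prod.instMeasurableSpace (m₂ := ℱ t))
        (fun q => (⟨min q.2.toNNReal t, Set.mem_Iic.mpr (min_le_right _ _)⟩, q.1)) := by
      refine Measurable.prodMk ?_ ?_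
      · exact Measurable.subtype_mk ((measurable_snd.real_toNNReal).min measurable_const)
      · exact measurable_fst.mono le_rfl (ℱ.le t)
    exact (hprog t).comp_measurable hι
  have hPhiCont : Continuous fun z : ℝ × (Fin r → ℝ) => Phi (A z.1) α z.2 := by
    unfold Phi
    refine Continuous.add (Continuous.add (Continuous.sub ?_ ?_) ?_) ?_
    · exact continuous_const.mul (continuous_finset_sum _ fun i _ =>
        continuous_const.mul ((continuous_mono _).comp continuous_snd))
    · exact continuous_const.mul ((continuous_mono α).comp continuous_snd)
    · exact continuous_finset_sum _ fun j _ =>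
        ((continuous_const.mul ((hAcont.matrix_elem j j).comp continuous_fst)).mul
          ((continuous_mono α).comp continuous_snd))
    · exact continuous_finset_sum _ fun k _ => continuous_finset_sum _ fun j _ =>
        ((continuous_const.mul ((hAcont.matrix_elem k j).comp continuous_fst)).mul
          ((continuous_mono _).comp continuous_snd))
  have hsm : StronglyMeasurable fun q : Ω × ℝ => Phi (A q.2) α (Y (min q.2.toNNReal t) q.1) := by
    have hpair : Measurable fun q : Ω × ℝ => (q.2, Y (min q.2.toNNReal t) q.1) :=
      measurable_snd.prodMk hY2.measurable
    exact (hPhiCont.measurable.comp hpair).stronglyMeasurable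
  have hmin : ∀ᵐ q ∂(μ.prod ((volume : Measure ℝ).restrict I)),
      Phi (A q.2) α (Y (min q.2.toNNReal t) q.1)
        = Function.uncurry (fun (ω : Ω) (s : ℝ) => Phi (A s) α (Y s.toNNReal ω)) q := by
    filter_upwards [hae] with q hq
    have hle : q.2.toNNReal ≤ t := Real.toNNReal_le_iff_le_coe.mpr hq.2
    simp [Function.uncurry, min_eq_left hle]
  have hYam : AEStronglyMeasurable
      (Function.uncurry (fun (ω : Ω) (s : ℝ) => Phi (A s) α (Y s.toNNReal ω)))
      (μ.prod ((volume : Measure ℝ).restrict I)) :=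
    hsm.aestronglyMeasurable.congr hmin
  have hintProd : Integrable
      (Function.uncurry (fun (ω : Ω) (s : ℝ) => Phi (A s) α (Y s.toNNReal ω)))
      (μ.prod ((volume : Measure ℝ).restrict I)) := by
    refine (integrable_const (PhiC α C₀)).mono' hYam ?_
    filter_upwards [hae] with q hq
    rw [Real.norm_eq_abs]
    have := Phi_abs_le (A q.2) α (Y q.2.toNNReal q.1) C₀ hC₀pos
      (fun k j => hC₀ q.2 (Set.mem_Icc_of_Ioc hq) k j) (hY0 _ _) (hY1 _ _)
    simpa [Function.uncurry] using this
  have swap := integral_integral_swap hintProd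
  have hinner : ∀ ω, (∫ s in (0:ℝ)..(t:ℝ), (GA (A s) (mono α) (Y s.toNNReal ω)
        + GB (mono α) (Y s.toNNReal ω)))
      = ∫ s in I, Phi (A s) α (Y s.toNNReal ω) := by
    intro ω
    simp_rw [generator_eq]
    rw [intervalIntegral.integral_of_le t.coe_nonneg]
  have hs_eq : ∀ s : ℝ, (∫ ω, Phi (A s) α (Y s.toNNReal ω) ∂μ)
      = (1 / 2) * ∑ i, ((α i : ℝ) * ((α i : ℝ) - 1)) *
            (∫ ω, mono (dec α i) (Y s.toNNReal ω) ∂μ)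
        - (1 / 2) * (((∑ i, α i : ℕ) : ℝ) ^ 2 - ((∑ i, α i : ℕ) : ℝ)) *
            (∫ ω, mono α (Y s.toNNReal ω) ∂μ)
        + (∑ j, (α j : ℝ) * A s j j * (∫ ω, mono α (Y s.toNNReal ω) ∂μ))
        + ∑ k, ∑ j ∈ univ.erase k, (α j : ℝ) * A s k j *
            (∫ ω, mono (inc (dec α j) k) (Y s.toNNReal ω) ∂μ) := by
    intro s
    have i1 : Integrable (fun ω => (1/2 : ℝ) * ∑ i, ((α i : ℝ) * ((α i : ℝ) - 1)) *
        mono (dec α i) (Y s.toNNReal ω)) μ :=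
      (integrable_finset_sum _ fun i _ => (hintMono _ _).const_mul _).const_mul _
    have i2 : Integrable (fun ω => (1/2 : ℝ) * (((∑ i, α i : ℕ):ℝ)^2 - ((∑ i, α i : ℕ):ℝ)) *
        mono α (Y s.toNNReal ω)) μ := (hintMono _ _).const_mul _
    have i3 : Integrable (fun ω => ∑ j, (α j:ℝ) * A s j j * mono α (Y s.toNNReal ω)) μ :=
      integrable_finset_sum _ fun j _ => (hintMono _ _).const_mul _
    have i4 : Integrable (fun ω => ∑ k, ∑ j ∈ univ.erase k,
        (α j:ℝ) * A s k j * mono (inc (dec α j) k) (Y s.toNNReal ω)) μ :=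
      integrable_finset_sum _ fun k _ => integrable_finset_sum _ fun j _ =>
        (hintMono _ _).const_mul _
    have h1 : (∫ ω, (1/2 : ℝ) * ∑ i, ((α i : ℝ) * ((α i : ℝ) - 1)) *
          mono (dec α i) (Y s.toNNReal ω) ∂μ)
        = (1 / 2) * ∑ i, ((α i : ℝ) * ((α i : ℝ) - 1)) *
            (∫ ω, mono (dec α i) (Y s.toNNReal ω) ∂μ) := by
      rw [integral_const_mul, integral_finset_sum _
        (fun i _ => (hintMono s.toNNReal (dec α i)).const_mul _)]
      congr 1
      exact Finset.sum_congr rfl fun i _ => integral_const_mul _ _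
    have h2 : (∫ ω, (1/2 : ℝ) * (((∑ i, α i : ℕ):ℝ)^2 - ((∑ i, α i : ℕ):ℝ)) *
          mono α (Y s.toNNReal ω) ∂μ)
        = (1 / 2) * (((∑ i, α i : ℕ) : ℝ) ^ 2 - ((∑ i, α i : ℕ) : ℝ)) *
            (∫ ω, mono α (Y s.toNNReal ω) ∂μ) := integral_const_mul _ _
    have h3 : (∫ ω, ∑ j, (α j:ℝ) * A s j j * mono α (Y s.toNNReal ω) ∂μ)
        = ∑ j, (α j : ℝ) * A s j j * (∫ ω, mono α (Y s.toNNReal ω) ∂μ) := by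
      rw [integral_finset_sum _ (fun j _ => (hintMono s.toNNReal α).const_mul _)]
      exact Finset.sum_congr rfl fun j _ => integral_const_mul _ _
    have h4 : (∫ ω, ∑ k, ∑ j ∈ univ.erase k,
          (α j:ℝ) * A s k j * mono (inc (dec α j) k) (Y s.toNNReal ω) ∂μ)
        = ∑ k, ∑ j ∈ univ.erase k, (α j : ℝ) * A s k j *
            (∫ ω, mono (inc (dec α j) k) (Y s.toNNReal ω) ∂μ) := by
      rw [integral_finset_sum _ (fun k _ => integrable_finset_sum _ fun j _ =>
        (hintMono _ _).const_mul _)]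
      refine Finset.sum_congr rfl fun k _ => ?_
      rw [integral_finset_sum _ (fun j _ => (hintMono _ _).const_mul _)]
      exact Finset.sum_congr rfl fun j _ => integral_const_mul _ _
    have i12 : Integrable (fun ω => (1/2 : ℝ) * ∑ i, ((α i : ℝ) * ((α i : ℝ) - 1)) *
        mono (dec α i) (Y s.toNNReal ω)
        - (1/2 : ℝ) * (((∑ i, α i : ℕ):ℝ)^2 - ((∑ i, α i : ℕ):ℝ)) *
        mono α (Y s.toNNReal ω)) μ := i1.sub i2
    have i123 : Integrable (fun ω => (1/2 : ℝ) * ∑ i, ((α i : ℝ) * ((α i : ℝ) - 1)) *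
        mono (dec α i) (Y s.toNNReal ω)
        - (1/2 : ℝ) * (((∑ i, α i : ℕ):ℝ)^2 - ((∑ i, α i : ℕ):ℝ)) *
        mono α (Y s.toNNReal ω)
        + ∑ j, (α j:ℝ) * A s j j * mono α (Y s.toNNReal ω)) μ := i12.add i3
    calc (∫ ω, Phi (A s) α (Y s.toNNReal ω) ∂μ)
        = ∫ ω, ((1/2 : ℝ) * ∑ i, ((α i : ℝ) * ((α i : ℝ) - 1)) *
              mono (dec α i) (Y s.toNNReal ω)
            - (1/2 : ℝ) * (((∑ i, α i : ℕ):ℝ)^2 - ((∑ i, α i : ℕ):ℝ)) *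
              mono α (Y s.toNNReal ω)
            + (∑ j, (α j:ℝ) * A s j j * mono α (Y s.toNNReal ω))
            + ∑ k, ∑ j ∈ univ.erase k,
              (α j:ℝ) * A s k j * mono (inc (dec α j) k) (Y s.toNNReal ω)) ∂μ := rfl
      _ = _ := by
          rw [integral_add i123 i4, integral_add i12 i3,
            integral_sub i1 i2, h1, h2, h3, h4]
  calc (∫ ω, ∏ i, (Y t ω i) ^ α i ∂μ)
      = ∫ ω, mono α (Y t ω) ∂μ := rfl
    _ = ∫ ω, mono α (Y 0 ω) ∂μ
        + ∫ ω, (∫ s in (0:ℝ)..(t:ℝ), (GA (A s) (mono α) (Y s.toNNReal ω)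
            + GB (mono α) (Y s.toNNReal ω))) ∂μ := step1
    _ = ∫ ω, mono α (Y 0 ω) ∂μ
        + ∫ ω, (∫ s in I, Phi (A s) α (Y s.toNNReal ω)) ∂μ := by
          rw [integral_congr_ae (Filter.Eventually.of_forall hinner)]
    _ = ∫ ω, mono α (Y 0 ω) ∂μ
        + ∫ s in I, (∫ ω, Phi (A s) α (Y s.toNNReal ω) ∂μ) := by rw [swap]
    _ = ∫ ω, mono α (Y 0 ω) ∂μ
        + ∫ s in I,
            ((1 / 2) * ∑ i, ((α i : ℝ) * ((α i : ℝ) - 1)) *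
                (∫ ω, mono (dec α i) (Y s.toNNReal ω) ∂μ)
             - (1 / 2) * (((∑ i, α i : ℕ) : ℝ) ^ 2 - ((∑ i, α i : ℕ) : ℝ)) *
                (∫ ω, mono α (Y s.toNNReal ω) ∂μ)
             + (∑ j, (α j : ℝ) * A s j j * (∫ ω, mono α (Y s.toNNReal ω) ∂μ))
             + ∑ k, ∑ j ∈ univ.erase k, (α j : ℝ) * A s k j *
                (∫ ω, mono (inc (dec α j) k) (Y s.toNNReal ω) ∂μ)) := by
          simp_rw [hs_eq]
    _ = _ := by
          rw [← intervalIntegral.integral_of_le t.coe_nonneg]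
          rfl
end
end
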